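/- arXiv:1910.00151 — 16 statements merged into one kernel-verified Lean document; each statement's English description precedes it below -/
import Mathlib

section
/- Conservation of mass for the 1D semi-discrete scheme: if ρ : [0,∞) → ℝ^N is a solution of the semi-discrete scheme, then for every t ≥ 0 one has Σ_{j=1}^N h_j ρ_j(t) = Σ_{j=1}^N h_j ρ_j(0). -/
theorem semi_discrete_mass_conservation_1d
    (N : ℕ) (hN : 2 ≤ N)
    (h : ℕ → ℝ) (hpos : ∀ j ∈ Finset.Icc 1 N, 0 < h j)
    (a : ℝ)
    (xhalf xc hhalf : ℕ → ℝ)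
    (hxhalf0 : xhalf 0 = a)
    (hxhalf : ∀ j ∈ Finset.Icc 1 N, xhalf j = xhalf (j - 1) + h j)
    (hxc : ∀ j ∈ Finset.Icc 1 N, xc j = xhalf (j - 1) + h j / 2)
    (hhhalf : ∀ j ∈ Finset.Icc 1 (N - 1), hhalf j = (h j + h (j + 1)) / 2)
    (V W : ℝ → ℝ)
    (Q : ℝ → (ℕ → ℝ) → ℝ)
    (hQ : ∀ (x : ℝ) (v : ℕ → ℝ), Q x v =
      Real.exp (-V x - ∑ i ∈ Finset.Icc 1 N, h i * W (xc i - x) * v i))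
    (ρ : ℝ → ℕ → ℝ)
    (M Mhalf C : ℝ → ℕ → ℝ)
    (hM : ∀ t : ℝ, ∀ j ∈ Finset.Icc 1 N, M t j = Q (xc j) (ρ t))
    (hMhalf : ∀ t : ℝ, ∀ j ∈ Finset.Icc 1 (N - 1), Mhalf t j = Q (xhalf j) (ρ t))
    (hC : ∀ t : ℝ, ∀ j ∈ Finset.Icc 1 (N - 1),
      C t j = Mhalf t j / hhalf j * (ρ t (j + 1) / M t (j + 1) - ρ t j / M t j))
    (hC0 : ∀ t : ℝ, C t 0 = 0) (hCN : ∀ t : ℝ, C t N = 0)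
    (hode : ∀ j ∈ Finset.Icc 1 N, ∀ t : ℝ, 0 ≤ t →
      HasDerivWithinAt (fun s => ρ s j) ((C t j - C t (j - 1)) / h j) (Set.Ici 0) t)
 :
    ∀ t : ℝ, 0 ≤ t →
      ∑ j ∈ Finset.Icc 1 N, h j * ρ t j = ∑ j ∈ Finset.Icc 1 N, h j * ρ 0 j := by

  intro t ht
  set F : ℝ → ℝ := fun s => ∑ j ∈ Finset.Icc 1 N, h j * ρ s j with hF
  have hFd : ∀ s : ℝ, 0 ≤ s → HasDerivWithinAt F 0 (Set.Ici 0) s := by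
    intro s hs
    have hsum : HasDerivWithinAt F
        (∑ j ∈ Finset.Icc 1 N, (C s j - C s (j - 1))) (Set.Ici 0) s := by
      apply HasDerivWithinAt.fun_sum
      intro j hj
      have hj' := hpos j hj
      have := (hode j hj s hs).const_mul (h j)
      convert this using 1
      · rfl
      field_simp
    have htel : ∑ j ∈ Finset.Icc 1 N, (C s j - C s (j - 1)) = 0 := by
      have key : ∀ n : ℕ, ∑ j ∈ Finset.Icc 1 n, (C s j - C s (j - 1)) = C s n - C s 0 := by
        intro n
        induction n with
        | zero => simp
        | succ k ih =>
          rw [Finset.sum_Icc_succ_top (by omega : 1 ≤ k + 1), ih]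
          simp
      rw [key N, hC0, hCN, sub_self]
    rwa [htel] at hsum
  have hcont : ContinuousOn F (Set.Icc 0 t) := by
    intro s hs
    exact ((hFd s hs.1).continuousWithinAt).mono (Set.Icc_subset_Ici_self)
  have := constant_of_has_deriv_right_zero hcont (fun s hs =>
    (hFd s hs.1).mono (Set.Ici_subset_Ici.mpr hs.1)) t (Set.right_mem_Icc.mpr ht)
  exact this
end

section
/- Positivity preservation for the 1D semi-discrete scheme: if ρ : [0,∞) → ℝ^N is a solution of the semi-discrete scheme and ρ_j(0) ≥ 0 for all 1 ≤ j ≤ N, then ρ_j(t) ≥ 0 for all t ≥ 0 and all 1 ≤ j ≤ N. -/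
open Set Filter Topology

set_option maxHeartbeats 2000000 in
theorem semi_discrete_positivity_1d
    (N : ℕ) (hN : 2 ≤ N)
    (h : ℕ → ℝ) (hpos : ∀ j ∈ Finset.Icc 1 N, 0 < h j)
    (a : ℝ)
    (xhalf xc hhalf : ℕ → ℝ)
    (hxhalf0 : xhalf 0 = a)
    (hxhalf : ∀ j ∈ Finset.Icc 1 N, xhalf j = xhalf (j - 1) + h j)
    (hxc : ∀ j ∈ Finset.Icc 1 N, xc j = xhalf (j - 1) + h j / 2)
    (hhhalf : ∀ j ∈ Finset.Icc 1 (N - 1), hhalf j = (h j + h (j + 1)) / 2)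
    (V W : ℝ → ℝ)
    (Q : ℝ → (ℕ → ℝ) → ℝ)
    (hQ : ∀ (x : ℝ) (v : ℕ → ℝ), Q x v =
      Real.exp (-V x - ∑ i ∈ Finset.Icc 1 N, h i * W (xc i - x) * v i))
    (ρ : ℝ → ℕ → ℝ)
    (M Mhalf C : ℝ → ℕ → ℝ)
    (hM : ∀ t : ℝ, ∀ j ∈ Finset.Icc 1 N, M t j = Q (xc j) (ρ t))
    (hMhalf : ∀ t : ℝ, ∀ j ∈ Finset.Icc 1 (N - 1), Mhalf t j = Q (xhalf j) (ρ t))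
    (hC : ∀ t : ℝ, ∀ j ∈ Finset.Icc 1 (N - 1),
      C t j = Mhalf t j / hhalf j * (ρ t (j + 1) / M t (j + 1) - ρ t j / M t j))
    (hC0 : ∀ t : ℝ, C t 0 = 0) (hCN : ∀ t : ℝ, C t N = 0)
    (hode : ∀ j ∈ Finset.Icc 1 N, ∀ t : ℝ, 0 ≤ t →
      HasDerivWithinAt (fun s => ρ s j) ((C t j - C t (j - 1)) / h j) (Set.Ici 0) t)
    (hinit : ∀ j ∈ Finset.Icc 1 N, 0 ≤ ρ 0 j) :
    ∀ t : ℝ, 0 ≤ t → ∀ j ∈ Finset.Icc 1 N, 0 ≤ ρ t j := by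
  intro t0 ht0 j0 hj0
  -- continuity of ρ components
  have hρcont : ∀ j ∈ Finset.Icc 1 N, ContinuousOn (fun s => ρ s j) (Set.Ici 0) :=
    fun j hj s hs => (hode j hj s hs).continuousWithinAt
  -- positivity of M, Mhalf
  have hMpos : ∀ (t : ℝ), ∀ j ∈ Finset.Icc 1 N, 0 < M t j := by
    intro t j hj; rw [hM t j hj, hQ]; exact Real.exp_pos _
  have hMhpos : ∀ (t : ℝ), ∀ j ∈ Finset.Icc 1 (N - 1), 0 < Mhalf t j := by
    intro t j hj; rw [hMhalf t j hj, hQ]; exact Real.exp_pos _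
  have hhalfpos : ∀ j ∈ Finset.Icc 1 (N - 1), 0 < hhalf j := by
    intro j hj
    rw [Finset.mem_Icc] at hj
    rw [hhhalf j (Finset.mem_Icc.mpr hj)]
    have h1 := hpos j (Finset.mem_Icc.mpr ⟨hj.1, by omega⟩)
    have h2 := hpos (j + 1) (Finset.mem_Icc.mpr ⟨by omega, by omega⟩)
    linarith
  -- continuity of M, Mhalf
  have hQcont : ∀ (x : ℝ), ContinuousOn (fun s => Q x (ρ s)) (Set.Ici 0) := by
    intro x
    have : (fun s => Q x (ρ s)) =
        fun s => Real.exp (-V x - ∑ i ∈ Finset.Icc 1 N, h i * W (xc i - x) * ρ s i) := by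
      funext s; rw [hQ]
    rw [this]
    apply Real.continuous_exp.comp_continuousOn
    apply ContinuousOn.sub continuousOn_const
    apply continuousOn_finset_sum
    intro i hi
    exact continuousOn_const.mul (hρcont i hi)
  have hMcont : ∀ j ∈ Finset.Icc 1 N, ContinuousOn (fun s => M s j) (Set.Ici 0) := by
    intro j hj
    have : (fun s => M s j) = fun s => Q (xc j) (ρ s) := funext fun s => hM s j hj
    rw [this]; exact hQcont _
  have hMhcont : ∀ j ∈ Finset.Icc 1 (N - 1), ContinuousOn (fun s => Mhalf s j) (Set.Ici 0) := by
    intro j hj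
    have : (fun s => Mhalf s j) = fun s => Q (xhalf j) (ρ s) := funext fun s => hMhalf s j hj
    rw [this]; exact hQcont _
  -- membership helpers
  have hmem1 : ∀ j ∈ Finset.Icc 1 (N - 1), j ∈ Finset.Icc 1 N := by
    intro j hj; rw [Finset.mem_Icc] at hj ⊢; omega
  have hmem2 : ∀ j ∈ Finset.Icc 1 (N - 1), j + 1 ∈ Finset.Icc 1 N := by
    intro j hj; rw [Finset.mem_Icc] at hj ⊢; omega
  -- the coefficient-sum function F and its bound K on [0, t0]
  set F : ℝ → ℝ := fun s => ∑ j ∈ Finset.Icc 1 (N - 1),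
    Mhalf s j / hhalf j * (1 / M s j + 1 / M s (j + 1)) with hF
  have hFnonneg : ∀ s : ℝ, 0 ≤ F s := by
    intro s
    apply Finset.sum_nonneg
    intro j hj
    have := hMhpos s j hj
    have := hhalfpos j hj
    have := hMpos s j (hmem1 j hj)
    have := hMpos s (j + 1) (hmem2 j hj)
    have h1 : 0 ≤ Mhalf s j / hhalf j := by positivity
    have h2 : 0 ≤ 1 / M s j + 1 / M s (j + 1) := by positivity
    exact mul_nonneg h1 h2
  have hFcont : ContinuousOn F (Set.Ici 0) := by
    apply continuousOn_finset_sum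
    intro j hj
    apply ContinuousOn.mul ((hMhcont j hj).div_const _)
    apply ContinuousOn.add
    · exact continuousOn_const.div (hMcont j (hmem1 j hj))
        (fun s _ => (hMpos s j (hmem1 j hj)).ne')
    · exact continuousOn_const.div (hMcont (j + 1) (hmem2 j hj))
        (fun s _ => (hMpos s (j + 1) (hmem2 j hj)).ne')
  have hsubI : Set.Icc (0:ℝ) t0 ⊆ Set.Ici 0 := fun x hx => hx.1
  obtain ⟨K, hK⟩ := (isCompact_Icc : IsCompact (Set.Icc (0:ℝ) t0)).exists_bound_of_continuousOn
    (hFcont.mono hsubI)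
  have hFK : ∀ s ∈ Set.Icc (0:ℝ) t0, F s ≤ K := fun s hs => (le_abs_self _).trans (hK s hs)
  have hKnn : 0 ≤ K := le_trans (hFnonneg 0) (hFK 0 ⟨le_refl 0, ht0⟩)
  -- minimal cell size
  obtain ⟨jm, hjm, hjmle⟩ := Finset.exists_min_image (Finset.Icc 1 N) h
    ⟨1, Finset.mem_Icc.mpr ⟨le_refl 1, by omega⟩⟩
  have hjmpos : 0 < h jm := hpos jm hjm
  set L : ℝ := 2 * K / h jm + 1 with hL
  have hLb : 2 * K / h jm ≥ 0 := by positivity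
  have hL1 : 1 ≤ L := by simp [hL]; linarith
  -- the key barrier estimate
  have key : ∀ ε : ℝ, 0 < ε → ∀ s ∈ Set.Icc (0:ℝ) t0, ∀ j ∈ Finset.Icc 1 N,
      0 < ρ s j + ε * Real.exp (L * s) := by
    intro ε hε
    by_contra hcon
    push_neg at hcon
    obtain ⟨s0, hs0, j1, hj1, hle1⟩ := hcon
    set S : Set ℝ := {s | s ∈ Set.Icc (0:ℝ) t0 ∧
      ∃ j ∈ Finset.Icc 1 N, ρ s j + ε * Real.exp (L * s) ≤ 0} with hS
    have hSne : S.Nonempty := ⟨s0, hs0, j1, hj1, hle1⟩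
    have hSbdd : BddBelow S := ⟨0, fun x hx => hx.1.1⟩
    have hScl : IsClosed S := by
      have : S = ⋃ j ∈ Finset.Icc 1 N,
          (Set.Icc (0:ℝ) t0 ∩ (fun s => ρ s j + ε * Real.exp (L * s)) ⁻¹' Set.Iic 0) := by
        ext s
        simp only [hS, Set.mem_setOf_eq, Set.mem_iUnion, Set.mem_inter_iff, Set.mem_preimage,
          Set.mem_Iic, exists_prop]
        tauto
      rw [this]
      apply isClosed_biUnion_finset
      intro j hj
      apply ContinuousOn.preimage_isClosed_of_isClosed _ isClosed_Icc isClosed_Iic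
      exact (((hρcont j hj).mono hsubI).add
        (continuous_const.mul (Real.continuous_exp.comp (continuous_const.mul continuous_id))).continuousOn)
    have htmem := hScl.csInf_mem hSne hSbdd
    set ts : ℝ := sInf S with hts
    obtain ⟨⟨hts0, htsT⟩, js, hjs, hjsle⟩ := htmem
    -- ts > 0
    have htspos : 0 < ts := by
      rcases eq_or_lt_of_le hts0 with heq0 | hlt
      · exfalso
        have := hinit js hjs
        rw [← heq0] at hjsle
        simp only [mul_zero, Real.exp_zero, mul_one] at hjsle
        linarith
      · exact hlt
    -- before ts everything is positive
    have hbefore : ∀ s ∈ Set.Ico (0:ℝ) ts, ∀ j ∈ Finset.Icc 1 N,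
        0 < ρ s j + ε * Real.exp (L * s) := by
      intro s hs j hj
      by_contra hc
      push_neg at hc
      have hmem : s ∈ S := ⟨⟨hs.1, le_trans hs.2.le htsT⟩, j, hj, hc⟩
      have := csInf_le hSbdd hmem
      rw [← hts] at this
      linarith [hs.2]
    -- NeBot of the left filter
    have hneb : (𝓝[Set.Ico (0:ℝ) ts] ts).NeBot := by
      apply mem_closure_iff_nhdsWithin_neBot.mp
      rw [closure_Ico htspos.ne]
      exact ⟨hts0, le_refl _⟩
    -- at ts everything is nonnegative
    have hge : ∀ j ∈ Finset.Icc 1 N, 0 ≤ ρ ts j + ε * Real.exp (L * ts) := by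
      intro j hj
      have hcont : ContinuousWithinAt (fun s => ρ s j + ε * Real.exp (L * s))
          (Set.Ico (0:ℝ) ts) ts := by
        apply ContinuousWithinAt.mono _ (fun x (hx : x ∈ Set.Ico (0:ℝ) ts) => hx.1)
        exact ((hρcont j hj ts hts0).add
          (continuous_const.mul
            (Real.continuous_exp.comp (continuous_const.mul continuous_id))).continuousWithinAt)
      haveI := hneb
      exact ge_of_tendsto hcont
        (eventually_mem_nhdsWithin.mono fun s hs => (hbefore s hs j hj).le)
    have heqjs : ρ ts js + ε * Real.exp (L * ts) = 0 := le_antisymm hjsle (hge js hjs)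
    set E : ℝ := ε * Real.exp (L * ts) with hE
    have hEpos : 0 < E := by positivity
    -- subterm bounds
    have hterm : ∀ j ∈ Finset.Icc 1 (N - 1),
        Mhalf ts j / hhalf j * (1 / M ts j) ≤ K ∧
        Mhalf ts j / hhalf j * (1 / M ts (j + 1)) ≤ K := by
      intro j hj
      have hsingle : Mhalf ts j / hhalf j * (1 / M ts j + 1 / M ts (j + 1)) ≤ F ts := by
        apply Finset.single_le_sum (f := fun i =>
          Mhalf ts i / hhalf i * (1 / M ts i + 1 / M ts (i + 1))) _ hj
        intro i hi
        have := hMhpos ts i hi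
        have := hhalfpos i hi
        have := hMpos ts i (hmem1 i hi)
        have := hMpos ts (i + 1) (hmem2 i hi)
        positivity
      have hFts := hFK ts ⟨hts0, htsT⟩
      have ha : 0 ≤ Mhalf ts j / hhalf j :=
        div_nonneg (hMhpos ts j hj).le (hhalfpos j hj).le
      have hm1 : 0 < M ts j := hMpos ts j (hmem1 j hj)
      have hm2 : 0 < M ts (j + 1) := hMpos ts (j + 1) (hmem2 j hj)
      have hi1 : 0 ≤ 1 / M ts j := by positivity
      have hi2 : 0 ≤ 1 / M ts (j + 1) := by positivity
      constructor
      · nlinarith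
      · nlinarith
    -- lower bound for C ts js
    have hjs' := Finset.mem_Icc.mp hjs
    have hClow : -(K * E) ≤ C ts js := by
      by_cases hjN : js = N
      · rw [hjN, hCN]
        nlinarith
      · have hjmem : js ∈ Finset.Icc 1 (N - 1) := Finset.mem_Icc.mpr ⟨hjs'.1, by omega⟩
        rw [hC ts js hjmem]
        have ha : 0 ≤ Mhalf ts js / hhalf js :=
          div_nonneg (hMhpos ts js hjmem).le (hhalfpos js hjmem).le
        have hm1 : 0 < M ts js := hMpos ts js hjs
        have hm2 : 0 < M ts (js + 1) := hMpos ts (js + 1) (hmem2 js hjmem)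
        have hb2 := (hterm js hjmem).2
        have hr1 : ρ ts js = -E := by linarith [heqjs]
        have hr2 : -E ≤ ρ ts (js + 1) := by
          have := hge (js + 1) (hmem2 js hjmem)
          linarith
        set aa := Mhalf ts js / hhalf js
        have e1 : aa * (ρ ts (js + 1) / M ts (js + 1) - ρ ts js / M ts js)
            = aa * ρ ts (js + 1) * (1 / M ts (js + 1)) + aa * E * (1 / M ts js) := by
          rw [hr1]; field_simp; ring
        rw [e1]
        have e2 : (-E) * (aa * (1 / M ts (js + 1))) ≤ aa * ρ ts (js + 1) * (1 / M ts (js + 1)) := by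
          nlinarith [mul_nonneg (mul_nonneg (by positivity : (0:ℝ) ≤ 1 / M ts (js + 1)) ha)
            (show 0 ≤ ρ ts (js + 1) + E by linarith)]
        have e3 : (-E) * K ≤ (-E) * (aa * (1 / M ts (js + 1))) :=
          mul_le_mul_of_nonpos_left hb2 (by linarith)
        have e4 : 0 ≤ aa * E * (1 / M ts js) := by positivity
        nlinarith
    -- upper bound for C ts (js - 1)
    have hChigh : C ts (js - 1) ≤ K * E := by
      by_cases hj1' : js = 1
      · rw [hj1']; simp only [Nat.sub_self]; rw [hC0]
        nlinarith
      · have hjmem : js - 1 ∈ Finset.Icc 1 (N - 1) := Finset.mem_Icc.mpr ⟨by omega, by omega⟩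
        have hsucc : js - 1 + 1 = js := by omega
        rw [hC ts (js - 1) hjmem, hsucc]
        have ha : 0 ≤ Mhalf ts (js - 1) / hhalf (js - 1) :=
          div_nonneg (hMhpos ts (js - 1) hjmem).le (hhalfpos (js - 1) hjmem).le
        have hm1 : 0 < M ts (js - 1) := hMpos ts (js - 1) (hmem1 _ hjmem)
        have hm2 : 0 < M ts js := by rw [← hsucc]; exact hMpos ts _ (hmem2 _ hjmem)
        have hb1 := (hterm (js - 1) hjmem).1
        have hr1 : ρ ts js = -E := by linarith [heqjs]
        have hr0 : -E ≤ ρ ts (js - 1) := by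
          have := hge (js - 1) (hmem1 _ hjmem)
          linarith
        set aa := Mhalf ts (js - 1) / hhalf (js - 1)
        have e1 : aa * (ρ ts js / M ts js - ρ ts (js - 1) / M ts (js - 1))
            = aa * (-E) * (1 / M ts js) + aa * (-(ρ ts (js - 1))) * (1 / M ts (js - 1)) := by
          rw [hr1]; field_simp; ring
        rw [e1]
        have e2 : aa * (-E) * (1 / M ts js) ≤ 0 := by
          have : 0 ≤ aa * E * (1 / M ts js) := by positivity
          nlinarith
        have e3 : aa * (-(ρ ts (js - 1))) * (1 / M ts (js - 1))
            ≤ aa * E * (1 / M ts (js - 1)) := by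
          nlinarith [mul_nonneg (mul_nonneg (by positivity : (0:ℝ) ≤ 1 / M ts (js - 1)) ha)
            (show 0 ≤ ρ ts (js - 1) + E by linarith)]
        have e4 : aa * E * (1 / M ts (js - 1)) = E * (aa * (1 / M ts (js - 1))) := by ring
        have e5 : E * (aa * (1 / M ts (js - 1))) ≤ E * K :=
          mul_le_mul_of_nonneg_left hb1 hEpos.le
        nlinarith
    -- the derivative of the barrier function at ts
    have hd := hode js hjs ts hts0
    have hexp : HasDerivWithinAt (fun s => ε * Real.exp (L * s))
        (ε * (Real.exp (L * ts) * (L * 1))) (Set.Ici 0) ts :=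
      ((((hasDerivAt_id ts).const_mul L).exp).const_mul ε).hasDerivWithinAt
    have hgd : HasDerivWithinAt (fun s => ρ s js + ε * Real.exp (L * s))
        ((C ts js - C ts (js - 1)) / h js + ε * (Real.exp (L * ts) * (L * 1)))
        (Set.Ici 0) ts := hd.add hexp
    -- the derivative is positive
    have hhjs : 0 < h js := hpos js hjs
    have hdlow : -(2 * K * E) / h js ≤ (C ts js - C ts (js - 1)) / h js := by
      apply (div_le_div_iff_of_pos_right hhjs).mpr; linarith
    have hdiv : 2 * K * E / h js ≤ 2 * K * E / h jm :=
      div_le_div_of_nonneg_left (by positivity) hjmpos (hjmle js hjs)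
    have hLE : (L - 1) * E = 2 * K * E / h jm := by rw [hL]; ring
    have hdlow2 : -((L - 1) * E) ≤ (C ts js - C ts (js - 1)) / h js := by
      rw [hLE]
      rw [neg_div] at hdlow
      linarith
    have hmulE : ε * (Real.exp (L * ts) * (L * 1)) = L * E := by rw [hE]; ring
    have hdpos : E ≤ (C ts js - C ts (js - 1)) / h js
        + ε * (Real.exp (L * ts) * (L * 1)) := by
      rw [hmulE]; linarith
    -- but the slope from the left is nonpositive
    rw [hasDerivWithinAt_iff_tendsto_slope] at hgd
    have hmono : 𝓝[Set.Ico (0:ℝ) ts] ts ≤ 𝓝[Set.Ici (0:ℝ) \ {ts}] ts :=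
      nhdsWithin_mono _ (fun x hx => ⟨hx.1, ne_of_lt hx.2⟩)
    haveI := hneb
    have hle0 : (C ts js - C ts (js - 1)) / h js
        + ε * (Real.exp (L * ts) * (L * 1)) ≤ 0 := by
      apply le_of_tendsto (hgd.mono_left hmono)
      filter_upwards [eventually_mem_nhdsWithin] with s hs
      have hgs : 0 < ρ s js + ε * Real.exp (L * s) := hbefore s hs js hjs
      rw [slope_def_field, heqjs]
      exact div_nonpos_of_nonneg_of_nonpos (by linarith) (by linarith [hs.2])
    linarith
  -- conclude
  by_contra hneg
  push_neg at hneg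
  have hεpos : 0 < -ρ t0 j0 / (2 * Real.exp (L * t0)) := by
    apply div_pos (by linarith) (by positivity)
  have hkey := key _ hεpos t0 ⟨ht0, le_refl _⟩ j0 hj0
  have hsimp : -ρ t0 j0 / (2 * Real.exp (L * t0)) * Real.exp (L * t0) = -ρ t0 j0 / 2 := by
    field_simp
  rw [hsimp] at hkey
  linarith
end

section
/- Entropy dissipation for the 1D semi-discrete scheme: assume W is symmetric (W(−x) = W(x) for all x ∈ ℝ) and let ρ : [0,∞) → ℝ^N be a solution of the semi-discrete scheme with ρ_j(t) > 0 for all j and all t ≥ 0. Then for every t ≥ 0 the discrete free energy E_h is differentiable at t with E_h'(t) ≤ −I_h(t), and moreover I_h(t) ≥ 0. -/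
private lemma abel_sum (n : ℕ) (c φ : ℕ → ℝ) :
    ∑ j ∈ Finset.Icc 1 (n + 1), (c j - c (j - 1)) * φ j
      = c (n + 1) * φ (n + 1) - c 0 * φ 1
        - ∑ j ∈ Finset.Icc 1 n, c j * (φ (j + 1) - φ j) := by
  induction n with
  | zero => simp; ring
  | succ m ih =>
    rw [Finset.sum_Icc_succ_top (by omega : 1 ≤ m + 1 + 1), ih,
      Finset.sum_Icc_succ_top (by omega : 1 ≤ m + 1)]
    simp only [Nat.add_sub_cancel]
    ring

theorem semi_discrete_entropy_dissipation_1d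
    (N : ℕ) (hN : 2 ≤ N)
    (h : ℕ → ℝ) (hpos : ∀ j ∈ Finset.Icc 1 N, 0 < h j)
    (a : ℝ)
    (xhalf xc hhalf : ℕ → ℝ)
    (hxhalf0 : xhalf 0 = a)
    (hxhalf : ∀ j ∈ Finset.Icc 1 N, xhalf j = xhalf (j - 1) + h j)
    (hxc : ∀ j ∈ Finset.Icc 1 N, xc j = xhalf (j - 1) + h j / 2)
    (hhhalf : ∀ j ∈ Finset.Icc 1 (N - 1), hhalf j = (h j + h (j + 1)) / 2)
    (V W : ℝ → ℝ)
    (Q : ℝ → (ℕ → ℝ) → ℝ)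
    (hQ : ∀ (x : ℝ) (v : ℕ → ℝ), Q x v =
      Real.exp (-V x - ∑ i ∈ Finset.Icc 1 N, h i * W (xc i - x) * v i))
    (ρ : ℝ → ℕ → ℝ)
    (M Mhalf C : ℝ → ℕ → ℝ)
    (hM : ∀ t : ℝ, ∀ j ∈ Finset.Icc 1 N, M t j = Q (xc j) (ρ t))
    (hMhalf : ∀ t : ℝ, ∀ j ∈ Finset.Icc 1 (N - 1), Mhalf t j = Q (xhalf j) (ρ t))
    (hC : ∀ t : ℝ, ∀ j ∈ Finset.Icc 1 (N - 1),
      C t j = Mhalf t j / hhalf j * (ρ t (j + 1) / M t (j + 1) - ρ t j / M t j))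
    (hC0 : ∀ t : ℝ, C t 0 = 0) (hCN : ∀ t : ℝ, C t N = 0)
    (hode : ∀ j ∈ Finset.Icc 1 N, ∀ t : ℝ, 0 ≤ t →
      HasDerivWithinAt (fun s => ρ s j) ((C t j - C t (j - 1)) / h j) (Set.Ici 0) t)
    (hWsymm : ∀ x : ℝ, W (-x) = W x)
    (hρpos : ∀ t : ℝ, 0 ≤ t → ∀ j ∈ Finset.Icc 1 N, 0 < ρ t j)
    (g : ℝ → ℕ → ℝ)
    (hg : ∀ t : ℝ, ∀ j ∈ Finset.Icc 1 N,
      g t j = ∑ i ∈ Finset.Icc 1 N, h i * W (xc i - xc j) * ρ t i)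
    (E : ℝ → ℝ)
    (hE : ∀ t : ℝ, E t = ∑ j ∈ Finset.Icc 1 N,
      h j * (ρ t j * Real.log (ρ t j) + V (xc j) * ρ t j + 1 / 2 * g t j * ρ t j))
    (I : ℝ → ℝ)
    (hI : ∀ t : ℝ, I t = ∑ j ∈ Finset.Icc 1 (N - 1),
      C t j * (Real.log (ρ t (j + 1) / M t (j + 1)) - Real.log (ρ t j / M t j))) :
    ∀ t : ℝ, 0 ≤ t →
      (∃ E' : ℝ, HasDerivWithinAt E E' (Set.Ici 0) t ∧ E' ≤ -I t) ∧ 0 ≤ I t := by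
  intro t ht
  have hρt : ∀ j ∈ Finset.Icc 1 N, 0 < ρ t j := hρpos t ht
  have hMpos : ∀ j ∈ Finset.Icc 1 N, 0 < M t j := by
    intro j hj; rw [hM t j hj, hQ]; exact Real.exp_pos _
  -- I ≥ 0
  have hInn : 0 ≤ I t := by
    rw [hI]
    apply Finset.sum_nonneg
    intro j hj
    have hj1 : j ∈ Finset.Icc 1 N := by
      simp only [Finset.mem_Icc] at hj ⊢; omega
    have hj2 : j + 1 ∈ Finset.Icc 1 N := by
      simp only [Finset.mem_Icc] at hj ⊢; omega
    rw [hC t j hj]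
    have hMh : 0 < Mhalf t j := by rw [hMhalf t j hj, hQ]; exact Real.exp_pos _
    have hhh : 0 < hhalf j := by
      rw [hhhalf j hj]
      have h1 := hpos j hj1; have h2 := hpos (j + 1) hj2; linarith
    have hu1 : 0 < ρ t j / M t j := div_pos (hρt j hj1) (hMpos j hj1)
    have hu2 : 0 < ρ t (j + 1) / M t (j + 1) := div_pos (hρt _ hj2) (hMpos _ hj2)
    have key : 0 ≤ (ρ t (j + 1) / M t (j + 1) - ρ t j / M t j) *
        (Real.log (ρ t (j + 1) / M t (j + 1)) - Real.log (ρ t j / M t j)) := by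
      rcases le_total (ρ t j / M t j) (ρ t (j + 1) / M t (j + 1)) with hle | hle
      · have := Real.log_le_log hu1 hle
        nlinarith
      · have := Real.log_le_log hu2 hle
        nlinarith
    have hfac : (0:ℝ) ≤ Mhalf t j / hhalf j := (div_pos hMh hhh).le
    calc (0:ℝ) ≤ Mhalf t j / hhalf j * ((ρ t (j + 1) / M t (j + 1) - ρ t j / M t j) *
          (Real.log (ρ t (j + 1) / M t (j + 1)) - Real.log (ρ t j / M t j))) :=
        mul_nonneg hfac key
      _ = Mhalf t j / hhalf j * (ρ t (j + 1) / M t (j + 1) - ρ t j / M t j) *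
          (Real.log (ρ t (j + 1) / M t (j + 1)) - Real.log (ρ t j / M t j)) := by ring
  refine ⟨?_, hInn⟩
  -- the derivative
  set d : ℕ → ℝ := fun j => (C t j - C t (j - 1)) / h j with hd_def
  have hd : ∀ j ∈ Finset.Icc 1 N, HasDerivWithinAt (fun s => ρ s j) (d j) (Set.Ici 0) t :=
    fun j hj => hode j hj t ht
  set D0 : ℝ := ∑ j ∈ Finset.Icc 1 N, h j *
    (((Real.log (ρ t j) + 1) * d j + V (xc j) * d j) +
      ((1 / 2 * ∑ i ∈ Finset.Icc 1 N, h i * W (xc i - xc j) * d i) * ρ t j +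
       (1 / 2 * ∑ i ∈ Finset.Icc 1 N, h i * W (xc i - xc j) * ρ t i) * d j)) with hD0_def
  have hEfun : E = fun s => ∑ j ∈ Finset.Icc 1 N,
      h j * ((ρ s j * Real.log (ρ s j) + V (xc j) * ρ s j) +
        (1 / 2 * ∑ i ∈ Finset.Icc 1 N, h i * W (xc i - xc j) * ρ s i) * ρ s j) := by
    funext s
    rw [hE s]
    refine Finset.sum_congr rfl fun j hj => ?_
    rw [hg s j hj]
  have hF : HasDerivWithinAt E D0 (Set.Ici 0) t := by
    rw [hEfun, hD0_def]
    apply HasDerivWithinAt.fun_sum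
    intro j hj
    refine HasDerivWithinAt.const_mul _ (HasDerivWithinAt.add (HasDerivWithinAt.add ?_ ?_) ?_)
    · exact (Real.hasDerivAt_mul_log (hρt j hj).ne').comp_hasDerivWithinAt t (hd j hj)
    · exact (hd j hj).const_mul _
    · exact ((HasDerivWithinAt.fun_sum fun i hi =>
        (hd i hi).const_mul (h i * W (xc i - xc j))).const_mul (1/2)).mul (hd j hj)
  refine ⟨D0, hF, le_of_eq ?_⟩
  -- now show D0 = -I t
  have hhd : ∀ j ∈ Finset.Icc 1 N, h j * d j = C t j - C t (j - 1) := by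
    intro j hj
    have hne : h j ≠ 0 := (hpos j hj).ne'
    rw [hd_def]
    field_simp
  have hlog : ∀ j ∈ Finset.Icc 1 N,
      Real.log (ρ t j / M t j) = Real.log (ρ t j) + V (xc j) + g t j := by
    intro j hj
    rw [Real.log_div (hρt j hj).ne' (hMpos j hj).ne', hM t j hj, hQ, Real.log_exp,
      hg t j hj]
    ring
  have hsymm : ∑ j ∈ Finset.Icc 1 N, h j *
        ((1 / 2 * ∑ i ∈ Finset.Icc 1 N, h i * W (xc i - xc j) * d i) * ρ t j)
      = ∑ j ∈ Finset.Icc 1 N, h j * ((1 / 2 * g t j) * d j) := by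
    have hW : ∀ i j : ℕ, W (xc i - xc j) = W (xc j - xc i) := by
      intro i j
      rw [← hWsymm (xc i - xc j)]
      ring_nf
    calc ∑ j ∈ Finset.Icc 1 N, h j *
          ((1 / 2 * ∑ i ∈ Finset.Icc 1 N, h i * W (xc i - xc j) * d i) * ρ t j)
        = ∑ j ∈ Finset.Icc 1 N, ∑ i ∈ Finset.Icc 1 N,
            1 / 2 * (h j * (h i * W (xc i - xc j) * d i) * ρ t j) := by
          refine Finset.sum_congr rfl fun j hj => ?_
          rw [Finset.mul_sum, Finset.sum_mul, Finset.mul_sum]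
          refine Finset.sum_congr rfl fun i hi => ?_
          ring
      _ = ∑ i ∈ Finset.Icc 1 N, ∑ j ∈ Finset.Icc 1 N,
            1 / 2 * (h j * (h i * W (xc i - xc j) * d i) * ρ t j) := Finset.sum_comm
      _ = ∑ j ∈ Finset.Icc 1 N, h j * ((1 / 2 * g t j) * d j) := by
          refine Finset.sum_congr rfl fun j hj => ?_
          rw [hg t j hj]
          simp only [Finset.mul_sum, Finset.sum_mul]
          refine Finset.sum_congr rfl fun i hi => ?_
          rw [hW i j]
          ring
  have step : D0 = ∑ j ∈ Finset.Icc 1 N,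
      (C t j - C t (j - 1)) * (Real.log (ρ t j / M t j) + 1) := by
    have split : D0 = (∑ j ∈ Finset.Icc 1 N, h j *
          ((1 / 2 * ∑ i ∈ Finset.Icc 1 N, h i * W (xc i - xc j) * d i) * ρ t j)) +
        ∑ j ∈ Finset.Icc 1 N, h j *
          (((Real.log (ρ t j) + 1) * d j + V (xc j) * d j) + (1 / 2 * g t j) * d j) := by
      rw [hD0_def, ← Finset.sum_add_distrib]
      refine Finset.sum_congr rfl fun j hj => ?_
      rw [hg t j hj]
      ring
    rw [split, hsymm, ← Finset.sum_add_distrib]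
    refine Finset.sum_congr rfl fun j hj => ?_
    rw [hlog j hj, ← hhd j hj]
    ring
  have hN1 : N - 1 + 1 = N := by omega
  have habel := abel_sum (N - 1) (C t) (fun j => Real.log (ρ t j / M t j) + 1)
  rw [hN1] at habel
  rw [step, habel, hC0, hCN, hI]
  have : ∑ j ∈ Finset.Icc 1 (N - 1), C t j *
        ((Real.log (ρ t (j + 1) / M t (j + 1)) + 1) - (Real.log (ρ t j / M t j) + 1))
      = ∑ j ∈ Finset.Icc 1 (N - 1), C t j *
        (Real.log (ρ t (j + 1) / M t (j + 1)) - Real.log (ρ t j / M t j)) :=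
    Finset.sum_congr rfl fun j _ => by ring
  rw [← this]
  ring
end

section
/- Unique solvability of the 1D fully discrete implicit-explicit scheme: for any time step τ > 0 and any given state ρ^n ∈ ℝ^N, there exists a unique ρ^{n+1} ∈ ℝ^N satisfying the fully discrete scheme equations. -/
def extFin (N : ℕ) (u : Fin N → ℝ) (j : ℕ) : ℝ :=
  if hj : 1 ≤ j ∧ j ≤ N then u ⟨j - 1, by omega⟩ else 0

def schemeMap (N : ℕ) (hc mc cc : ℕ → ℝ) (τ : ℝ) : (Fin N → ℝ) →ₗ[ℝ] (Fin N → ℝ) where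
  toFun u := fun i =>
    hc ((i : ℕ) + 1) * mc ((i : ℕ) + 1) * u i
      - τ * (cc ((i : ℕ) + 1) * (extFin N u ((i : ℕ) + 2) - u i)
          - cc (i : ℕ) * (u i - extFin N u (i : ℕ)))
  map_add' u v := by
    funext i
    simp only [extFin, Pi.add_apply]
    split_ifs <;> ring
  map_smul' r u := by
    funext i
    simp only [extFin, Pi.smul_apply, smul_eq_mul, RingHom.id_apply]
    split_ifs <;> ring

lemma schemeMap_apply (N : ℕ) (hc mc cc : ℕ → ℝ) (τ : ℝ) (u : Fin N → ℝ) (i : Fin N) :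
    schemeMap N hc mc cc τ u i =
      hc ((i : ℕ) + 1) * mc ((i : ℕ) + 1) * u i
        - τ * (cc ((i : ℕ) + 1) * (extFin N u ((i : ℕ) + 2) - u i)
            - cc (i : ℕ) * (u i - extFin N u (i : ℕ))) := rfl

lemma schemeMap_nonpos (N : ℕ) (hNpos : 0 < N) (hc mc cc : ℕ → ℝ) (τ : ℝ)
    (hτ : 0 < τ) (hmpos : ∀ j, 1 ≤ j → j ≤ N → 0 < hc j * mc j)
    (cnn : ∀ j, 0 ≤ cc j) (cc0 : cc 0 = 0) (ccN : cc N = 0)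
    (u : Fin N → ℝ) (hu : schemeMap N hc mc cc τ u = 0) :
    ∀ i, u i ≤ 0 := by
  have hne : Nonempty (Fin N) := ⟨⟨0, hNpos⟩⟩
  obtain ⟨i0, hi0⟩ := Finite.exists_max u
  suffices h0 : u i0 ≤ 0 by intro i; exact le_trans (hi0 i) h0
  have heq := congrFun hu i0
  rw [schemeMap_apply] at heq
  simp only [Pi.zero_apply] at heq
  have hlt : (i0 : ℕ) < N := i0.isLt
  have t1 : cc ((i0 : ℕ) + 1) * (extFin N u ((i0 : ℕ) + 2) - u i0) ≤ 0 := by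
    by_cases hcase : (i0 : ℕ) + 1 < N
    · have hE : extFin N u ((i0 : ℕ) + 2) = u ⟨(i0 : ℕ) + 1, hcase⟩ :=
        dif_pos ⟨by omega, by omega⟩
      rw [hE]
      exact mul_nonpos_of_nonneg_of_nonpos (cnn _) (sub_nonpos.2 (hi0 _))
    · have hNe : (i0 : ℕ) + 1 = N := by omega
      rw [hNe, ccN, zero_mul]
  have t2 : 0 ≤ cc (i0 : ℕ) * (u i0 - extFin N u (i0 : ℕ)) := by
    by_cases hcase : (i0 : ℕ) = 0
    · rw [hcase, cc0, zero_mul]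
    · have hE : extFin N u (i0 : ℕ) = u ⟨(i0 : ℕ) - 1, by omega⟩ :=
        dif_pos ⟨by omega, by omega⟩
      rw [hE]
      exact mul_nonneg (cnn _) (sub_nonneg.2 (hi0 _))
  have hA := hmpos ((i0 : ℕ) + 1) (by omega) (by omega)
  nlinarith [heq, t1, t2, hA, hτ]

lemma schemeMap_injective (N : ℕ) (hNpos : 0 < N) (hc mc cc : ℕ → ℝ) (τ : ℝ)
    (hτ : 0 < τ) (hmpos : ∀ j, 1 ≤ j → j ≤ N → 0 < hc j * mc j)
    (cnn : ∀ j, 0 ≤ cc j) (cc0 : cc 0 = 0) (ccN : cc N = 0) :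
    Function.Injective (schemeMap N hc mc cc τ) := by
  intro a b hab
  have h1 : schemeMap N hc mc cc τ (a - b) = 0 := by rw [map_sub, hab, sub_self]
  have h2 : schemeMap N hc mc cc τ (b - a) = 0 := by rw [map_sub, hab, sub_self]
  funext i
  have k1 := schemeMap_nonpos N hNpos hc mc cc τ hτ hmpos cnn cc0 ccN _ h1 i
  have k2 := schemeMap_nonpos N hNpos hc mc cc τ hτ hmpos cnn cc0 ccN _ h2 i
  simp only [Pi.sub_apply] at k1 k2
  linarith

theorem fully_discrete_unique_solvability_1d
    (N : ℕ) (hN : 2 ≤ N)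
    (h : ℕ → ℝ) (hpos : ∀ j ∈ Finset.Icc 1 N, 0 < h j)
    (a : ℝ)
    (xhalf xc hhalf : ℕ → ℝ)
    (hxhalf0 : xhalf 0 = a)
    (hxhalf : ∀ j ∈ Finset.Icc 1 N, xhalf j = xhalf (j - 1) + h j)
    (hxc : ∀ j ∈ Finset.Icc 1 N, xc j = xhalf (j - 1) + h j / 2)
    (hhhalf : ∀ j ∈ Finset.Icc 1 (N - 1), hhalf j = (h j + h (j + 1)) / 2)
    (V W : ℝ → ℝ)
    (Q : ℝ → (ℕ → ℝ) → ℝ)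
    (hQ : ∀ (x : ℝ) (v : ℕ → ℝ), Q x v =
      Real.exp (-V x - ∑ i ∈ Finset.Icc 1 N, h i * W (xc i - x) * v i))
    (ρn : ℕ → ℝ) (τ : ℝ) (hτ : 0 < τ)
    (Mn Mnhalf : ℕ → ℝ)
    (hMn : ∀ j ∈ Finset.Icc 1 N, Mn j = Q (xc j) ρn)
    (hMnhalf : ∀ j ∈ Finset.Icc 1 (N - 1), Mnhalf j = Q (xhalf j) ρn)
    (Cfun : (ℕ → ℝ) → ℕ → ℝ)
    (hCfun : ∀ u : ℕ → ℝ, ∀ j ∈ Finset.Icc 1 (N - 1),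
      Cfun u j = Mnhalf j / hhalf j * (u (j + 1) / Mn (j + 1) - u j / Mn j))
    (hCfun0 : ∀ u : ℕ → ℝ, Cfun u 0 = 0) (hCfunN : ∀ u : ℕ → ℝ, Cfun u N = 0) :
    ∃ ρ1 : ℕ → ℝ,
      (∀ j ∈ Finset.Icc 1 N, (ρ1 j - ρn j) / τ = (Cfun ρ1 j - Cfun ρ1 (j - 1)) / h j) ∧
      ∀ σ : ℕ → ℝ,
        (∀ j ∈ Finset.Icc 1 N, (σ j - ρn j) / τ = (Cfun σ j - Cfun σ (j - 1)) / h j) →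
        ∀ j ∈ Finset.Icc 1 N, σ j = ρ1 j := by
  have mpos : ∀ j, 1 ≤ j → j ≤ N → 0 < Mn j := by
    intro j h1 h2
    rw [hMn j (Finset.mem_Icc.2 ⟨h1, h2⟩), hQ]
    exact Real.exp_pos _
  obtain ⟨c, hcdef⟩ : ∃ c : ℕ → ℝ,
      ∀ j, c j = if 1 ≤ j ∧ j ≤ N - 1 then Mnhalf j / hhalf j else 0 := ⟨_, fun _ => rfl⟩
  have cnn : ∀ j, 0 ≤ c j := by
    intro j; rw [hcdef]; split_ifs with hc1
    · have hmem : j ∈ Finset.Icc 1 (N - 1) := Finset.mem_Icc.2 hc1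
      have h1 : 0 < Mnhalf j := by rw [hMnhalf j hmem, hQ]; exact Real.exp_pos _
      have h2 : 0 < hhalf j := by
        rw [hhhalf j hmem]
        have p1 := hpos j (Finset.mem_Icc.2 ⟨by omega, by omega⟩)
        have p2 := hpos (j + 1) (Finset.mem_Icc.2 ⟨by omega, by omega⟩)
        linarith
      positivity
    · exact le_refl 0
  have c0 : c 0 = 0 := by rw [hcdef]; simp
  have cN : c N = 0 := by rw [hcdef, if_neg (by omega)]
  have hmpos : ∀ j, 1 ≤ j → j ≤ N → 0 < h j * Mn j := fun j a b =>
    mul_pos (hpos j (Finset.mem_Icc.2 ⟨a, b⟩)) (mpos j a b)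
  -- key equivalence
  have key : ∀ v : ℕ → ℝ, ∀ i : Fin N,
      ((v ((i : ℕ) + 1) - ρn ((i : ℕ) + 1)) / τ =
          (Cfun v ((i : ℕ) + 1) - Cfun v (i : ℕ)) / h ((i : ℕ) + 1) ↔
        schemeMap N h Mn c τ (fun k : Fin N => v ((k : ℕ) + 1) / Mn ((k : ℕ) + 1)) i =
          h ((i : ℕ) + 1) * ρn ((i : ℕ) + 1)) := by
    intro v i
    have hlt : (i : ℕ) < N := i.isLt
    have hE : ∀ k, 1 ≤ k → k ≤ N →
        extFin N (fun k : Fin N => v ((k : ℕ) + 1) / Mn ((k : ℕ) + 1)) k = v k / Mn k := by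
      intro k h1k h2k
      rw [extFin, dif_pos ⟨h1k, h2k⟩]
      show v (k - 1 + 1) / Mn (k - 1 + 1) = v k / Mn k
      rw [show k - 1 + 1 = k from by omega]
    have hCj : Cfun v ((i : ℕ) + 1) = c ((i : ℕ) + 1) *
        (extFin N (fun k : Fin N => v ((k : ℕ) + 1) / Mn ((k : ℕ) + 1)) ((i : ℕ) + 2)
          - v ((i : ℕ) + 1) / Mn ((i : ℕ) + 1)) := by
      by_cases hcase : (i : ℕ) + 1 < N
      · have hmem : (i : ℕ) + 1 ∈ Finset.Icc 1 (N - 1) := Finset.mem_Icc.2 ⟨by omega, by omega⟩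
        rw [hCfun v _ hmem, hcdef, if_pos ⟨by omega, by omega⟩,
          hE ((i : ℕ) + 2) (by omega) (by omega)]
      · have hNe : (i : ℕ) + 1 = N := by omega
        rw [hNe, hCfunN, hcdef, if_neg (by omega), zero_mul]
    have hCjm : Cfun v (i : ℕ) = c (i : ℕ) *
        (v ((i : ℕ) + 1) / Mn ((i : ℕ) + 1)
          - extFin N (fun k : Fin N => v ((k : ℕ) + 1) / Mn ((k : ℕ) + 1)) (i : ℕ)) := by
      by_cases hcase : (i : ℕ) = 0
      · rw [hcase, hCfun0, c0, zero_mul]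
      · have hmem : (i : ℕ) ∈ Finset.Icc 1 (N - 1) := Finset.mem_Icc.2 ⟨by omega, by omega⟩
        rw [hCfun v _ hmem, hcdef, if_pos ⟨by omega, by omega⟩, hE (i : ℕ) (by omega) (by omega)]
    have hhj := hpos ((i : ℕ) + 1) (Finset.mem_Icc.2 ⟨by omega, by omega⟩)
    have hMj := mpos ((i : ℕ) + 1) (by omega) (by omega)
    have hred : Mn ((i : ℕ) + 1) * (v ((i : ℕ) + 1) / Mn ((i : ℕ) + 1)) = v ((i : ℕ) + 1) :=
      mul_div_cancel₀ _ hMj.ne'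
    rw [div_eq_div_iff hτ.ne' hhj.ne', hCj, hCjm, schemeMap_apply]
    show _ ↔ h ((i : ℕ) + 1) * Mn ((i : ℕ) + 1) * (v ((i : ℕ) + 1) / Mn ((i : ℕ) + 1))
        - τ * (c ((i : ℕ) + 1) *
            (extFin N (fun k : Fin N => v ((k : ℕ) + 1) / Mn ((k : ℕ) + 1)) ((i : ℕ) + 2)
              - v ((i : ℕ) + 1) / Mn ((i : ℕ) + 1))
          - c (i : ℕ) * (v ((i : ℕ) + 1) / Mn ((i : ℕ) + 1)
              - extFin N (fun k : Fin N => v ((k : ℕ) + 1) / Mn ((k : ℕ) + 1)) (i : ℕ)))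
        = h ((i : ℕ) + 1) * ρn ((i : ℕ) + 1)
    constructor
    · intro heq
      linear_combination heq + h ((i : ℕ) + 1) * hred
    · intro heq
      linear_combination heq - h ((i : ℕ) + 1) * hred
  have hinj := schemeMap_injective N (by omega) h Mn c τ hτ hmpos cnn c0 cN
  have hsurj : Function.Surjective (schemeMap N h Mn c τ) :=
    LinearMap.injective_iff_surjective.1 hinj
  obtain ⟨w, hw⟩ := hsurj (fun i : Fin N => h ((i : ℕ) + 1) * ρn ((i : ℕ) + 1))
  obtain ⟨ρ1, hρ1def⟩ : ∃ ρ1 : ℕ → ℝ,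
      ∀ j, ρ1 j = if hj : 1 ≤ j ∧ j ≤ N then Mn j * w ⟨j - 1, by omega⟩ else 0 :=
    ⟨_, fun _ => rfl⟩
  have hfun : (fun k : Fin N => ρ1 ((k : ℕ) + 1) / Mn ((k : ℕ) + 1)) = w := by
    funext k
    have hMk := mpos ((k : ℕ) + 1) (by omega) (by omega)
    rw [hρ1def, dif_pos ⟨by omega, (by omega : (k : ℕ) + 1 ≤ N)⟩,
      mul_div_cancel_left₀ _ hMk.ne']
    exact congrArg w (Fin.ext (show (k : ℕ) + 1 - 1 = (k : ℕ) from by omega))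
  refine ⟨ρ1, ?_, ?_⟩
  · -- existence
    intro j hj
    have hj' := Finset.mem_Icc.1 hj
    obtain ⟨i, rfl⟩ : ∃ i : Fin N, (i : ℕ) + 1 = j :=
      ⟨⟨j - 1, by omega⟩, show j - 1 + 1 = j from by omega⟩
    have h2 : schemeMap N h Mn c τ (fun k : Fin N => ρ1 ((k : ℕ) + 1) / Mn ((k : ℕ) + 1)) i =
        h ((i : ℕ) + 1) * ρn ((i : ℕ) + 1) := by
      rw [hfun]; exact congrFun hw i
    exact (key ρ1 i).2 h2
  · -- uniqueness
    intro σ hσ j hj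
    have hj' := Finset.mem_Icc.1 hj
    have hLσ : schemeMap N h Mn c τ (fun k : Fin N => σ ((k : ℕ) + 1) / Mn ((k : ℕ) + 1)) =
        (fun i : Fin N => h ((i : ℕ) + 1) * ρn ((i : ℕ) + 1)) := by
      funext i
      have hmem : (i : ℕ) + 1 ∈ Finset.Icc 1 N := Finset.mem_Icc.2 ⟨by omega, by omega⟩
      exact (key σ i).1 (hσ ((i : ℕ) + 1) hmem)
    have huσ : (fun k : Fin N => σ ((k : ℕ) + 1) / Mn ((k : ℕ) + 1)) = w :=
      hinj (by rw [hLσ, hw])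
    obtain ⟨i, rfl⟩ : ∃ i : Fin N, (i : ℕ) + 1 = j :=
      ⟨⟨j - 1, by omega⟩, show j - 1 + 1 = j from by omega⟩
    have hui := congrFun huσ i
    have hMj := mpos ((i : ℕ) + 1) (by omega) (by omega)
    rw [hρ1def, dif_pos ⟨by omega, (by omega : (i : ℕ) + 1 ≤ N)⟩]
    show σ ((i : ℕ) + 1) = Mn ((i : ℕ) + 1) * w i
    rw [← hui]
    exact (mul_div_cancel₀ _ hMj.ne').symm
end

section
/- Conservation of mass for the 1D fully discrete scheme: if ρ^{n+1} ∈ ℝ^N satisfies the fully discrete scheme with data ρ^n ∈ ℝ^N and τ > 0, then Σ_{j=1}^N h_j ρ^{n+1}_j = Σ_{j=1}^N h_j ρ^n_j. -/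
theorem fully_discrete_mass_conservation_1d
    (N : ℕ) (hN : 2 ≤ N)
    (h : ℕ → ℝ) (hpos : ∀ j ∈ Finset.Icc 1 N, 0 < h j)
    (a : ℝ)
    (xhalf xc hhalf : ℕ → ℝ)
    (hxhalf0 : xhalf 0 = a)
    (hxhalf : ∀ j ∈ Finset.Icc 1 N, xhalf j = xhalf (j - 1) + h j)
    (hxc : ∀ j ∈ Finset.Icc 1 N, xc j = xhalf (j - 1) + h j / 2)
    (hhhalf : ∀ j ∈ Finset.Icc 1 (N - 1), hhalf j = (h j + h (j + 1)) / 2)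
    (V W : ℝ → ℝ)
    (Q : ℝ → (ℕ → ℝ) → ℝ)
    (hQ : ∀ (x : ℝ) (v : ℕ → ℝ), Q x v =
      Real.exp (-V x - ∑ i ∈ Finset.Icc 1 N, h i * W (xc i - x) * v i))
    (ρn ρ1 : ℕ → ℝ) (τ : ℝ) (hτ : 0 < τ)
    (Mn Mnhalf : ℕ → ℝ)
    (hMn : ∀ j ∈ Finset.Icc 1 N, Mn j = Q (xc j) ρn)
    (hMnhalf : ∀ j ∈ Finset.Icc 1 (N - 1), Mnhalf j = Q (xhalf j) ρn)
    (C : ℕ → ℝ)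
    (hC : ∀ j ∈ Finset.Icc 1 (N - 1),
      C j = Mnhalf j / hhalf j * (ρ1 (j + 1) / Mn (j + 1) - ρ1 j / Mn j))
    (hC0 : C 0 = 0) (hCN : C N = 0)
    (hscheme : ∀ j ∈ Finset.Icc 1 N, (ρ1 j - ρn j) / τ = (C j - C (j - 1)) / h j)
 :
    ∑ j ∈ Finset.Icc 1 N, h j * ρ1 j = ∑ j ∈ Finset.Icc 1 N, h j * ρn j := by

  have key : ∀ j ∈ Finset.Icc 1 N, h j * ρ1 j - h j * ρn j = τ * (C j - C (j-1)) := by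
    intro j hj
    have h1 := hscheme j hj
    have h2 := hpos j hj
    field_simp at h1
    nlinarith [h1]
  have hsum : ∑ j ∈ Finset.Icc 1 N, (h j * ρ1 j - h j * ρn j)
      = τ * ∑ j ∈ Finset.Icc 1 N, (C j - C (j-1)) := by
    rw [Finset.mul_sum]
    exact Finset.sum_congr rfl key
  have htel : ∑ j ∈ Finset.Icc 1 N, (C j - C (j-1)) = C N - C 0 := by
    rw [← Finset.Ico_add_one_right_eq_Icc, Finset.sum_Ico_eq_sum_range]
    have : ∀ i ∈ Finset.range (N + 1 - 1), C (1 + i) - C (1 + i - 1) = C (i + 1) - C i := by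
      intro i _
      congr 1 <;> congr 1 <;> omega
    rw [Finset.sum_congr rfl this]
    have := Finset.sum_range_sub C N
    simpa using this
  have : ∑ j ∈ Finset.Icc 1 N, (h j * ρ1 j - h j * ρn j) = 0 := by
    rw [hsum, htel, hC0, hCN]; ring
  have := Finset.sum_sub_distrib (s := Finset.Icc 1 N)
    (f := fun j => h j * ρ1 j) (g := fun j => h j * ρn j)
  linarith [Finset.sum_sub_distrib (s := Finset.Icc 1 N)
    (f := fun j => h j * ρ1 j) (g := fun j => h j * ρn j) ▸ this]
end

section
/- Positivity preservation for the 1D fully discrete scheme without time step restriction: if ρ^{n+1} ∈ ℝ^N satisfies the fully discrete scheme with data ρ^n ∈ ℝ^N and any τ > 0, and ρ^n_j ≥ 0 for all 1 ≤ j ≤ N, then ρ^{n+1}_j ≥ 0 for all 1 ≤ j ≤ N. -/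
theorem fully_discrete_positivity_1d
    (N : ℕ) (hN : 2 ≤ N)
    (h : ℕ → ℝ) (hpos : ∀ j ∈ Finset.Icc 1 N, 0 < h j)
    (a : ℝ)
    (xhalf xc hhalf : ℕ → ℝ)
    (hxhalf0 : xhalf 0 = a)
    (hxhalf : ∀ j ∈ Finset.Icc 1 N, xhalf j = xhalf (j - 1) + h j)
    (hxc : ∀ j ∈ Finset.Icc 1 N, xc j = xhalf (j - 1) + h j / 2)
    (hhhalf : ∀ j ∈ Finset.Icc 1 (N - 1), hhalf j = (h j + h (j + 1)) / 2)
    (V W : ℝ → ℝ)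
    (Q : ℝ → (ℕ → ℝ) → ℝ)
    (hQ : ∀ (x : ℝ) (v : ℕ → ℝ), Q x v =
      Real.exp (-V x - ∑ i ∈ Finset.Icc 1 N, h i * W (xc i - x) * v i))
    (ρn ρ1 : ℕ → ℝ) (τ : ℝ) (hτ : 0 < τ)
    (Mn Mnhalf : ℕ → ℝ)
    (hMn : ∀ j ∈ Finset.Icc 1 N, Mn j = Q (xc j) ρn)
    (hMnhalf : ∀ j ∈ Finset.Icc 1 (N - 1), Mnhalf j = Q (xhalf j) ρn)
    (C : ℕ → ℝ)
    (hC : ∀ j ∈ Finset.Icc 1 (N - 1),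
      C j = Mnhalf j / hhalf j * (ρ1 (j + 1) / Mn (j + 1) - ρ1 j / Mn j))
    (hC0 : C 0 = 0) (hCN : C N = 0)
    (hscheme : ∀ j ∈ Finset.Icc 1 N, (ρ1 j - ρn j) / τ = (C j - C (j - 1)) / h j)
    (hρn : ∀ j ∈ Finset.Icc 1 N, 0 ≤ ρn j) :
    ∀ j ∈ Finset.Icc 1 N, 0 ≤ ρ1 j := by
  have hNe : (Finset.Icc 1 N).Nonempty := ⟨1, by simp [Finset.mem_Icc]; omega⟩
  have hMpos : ∀ j ∈ Finset.Icc 1 N, 0 < Mn j := by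
    intro j hj; rw [hMn j hj, hQ]; exact Real.exp_pos _
  have hMhpos : ∀ j ∈ Finset.Icc 1 (N-1), 0 < Mnhalf j := by
    intro j hj; rw [hMnhalf j hj, hQ]; exact Real.exp_pos _
  have hhhpos : ∀ j ∈ Finset.Icc 1 (N-1), 0 < hhalf j := by
    intro j hj
    rw [hhhalf j hj]
    rw [Finset.mem_Icc] at hj
    have h1 := hpos j (by rw [Finset.mem_Icc]; omega)
    have h2 := hpos (j+1) (by rw [Finset.mem_Icc]; omega)
    linarith
  obtain ⟨m, hm, hmin⟩ := Finset.exists_min_image (Finset.Icc 1 N) (fun j => ρ1 j / Mn j) hNe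
  have hmm := Finset.mem_Icc.mp hm
  have hCm : 0 ≤ C m := by
    rcases eq_or_lt_of_le hmm.2 with hmN | hmN
    · rw [hmN, hCN]
    · have hm' : m ∈ Finset.Icc 1 (N-1) := Finset.mem_Icc.mpr ⟨hmm.1, by omega⟩
      rw [hC m hm']
      have h1 : ρ1 m / Mn m ≤ ρ1 (m+1) / Mn (m+1) :=
        hmin (m+1) (Finset.mem_Icc.mpr ⟨by omega, by omega⟩)
      have h2 := hMhpos m hm'
      have h3 := hhhpos m hm'
      have h4 : 0 ≤ Mnhalf m / hhalf m := le_of_lt (div_pos h2 h3)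
      nlinarith
  have hCm' : C (m-1) ≤ 0 := by
    rcases eq_or_lt_of_le hmm.1 with hm1 | hm1
    · rw [← hm1]; simp [hC0]
    · have hm' : m - 1 ∈ Finset.Icc 1 (N-1) := Finset.mem_Icc.mpr ⟨by omega, by omega⟩
      rw [hC _ hm']
      have he : m - 1 + 1 = m := by omega
      rw [he]
      have h1 : ρ1 m / Mn m ≤ ρ1 (m-1) / Mn (m-1) :=
        hmin (m-1) (Finset.mem_Icc.mpr ⟨by omega, by omega⟩)
      have h2 := hMhpos _ hm'
      have h3 := hhhpos _ hm'
      have h4 : 0 ≤ Mnhalf (m-1) / hhalf (m-1) := le_of_lt (div_pos h2 h3)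
      nlinarith
  have hsch := hscheme m hm
  have hhm := hpos m hm
  have hρ1m : 0 ≤ ρ1 m := by
    have h1 : 0 ≤ (C m - C (m-1)) / h m := div_nonneg (by linarith) hhm.le
    have h2 : 0 ≤ (ρ1 m - ρn m) / τ := hsch ▸ h1
    have h3 : 0 ≤ ρ1 m - ρn m := by
      by_contra hcon
      push_neg at hcon
      have := div_neg_of_neg_of_pos hcon hτ
      linarith
    have := hρn m hm
    linarith
  have hum : 0 ≤ ρ1 m / Mn m := div_nonneg hρ1m (hMpos m hm).le
  intro j hj
  have h1 := hmin j hj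
  have h2 := hMpos j hj
  have h3 : 0 ≤ ρ1 j / Mn j := le_trans hum h1
  have h5 := mul_nonneg h3 h2.le
  rwa [div_mul_cancel₀ _ (ne_of_gt h2)] at h5
end

section
/- Entropy production identity for the 1D fully discrete scheme: if ρ^{n+1} ∈ ℝ^N satisfies the fully discrete scheme with data ρ^n ∈ ℝ^N and τ > 0, and ρ^{n+1}_j > 0 for all j, then Σ_{j=1}^N h_j (ρ^{n+1}_j − ρ^n_j) · log(ρ^{n+1}_j/M^n_j) = −τ I^n_h, where I^n_h = Σ_{j=1}^{N−1} C^{n,*}_{j+1/2} (log(ρ^{n+1}_{j+1}/M^n_{j+1}) − log(ρ^{n+1}_j/M^n_j)); moreover I^n_h ≥ 0. -/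
theorem fully_discrete_entropy_production_identity_1d
    (N : ℕ) (hN : 2 ≤ N)
    (h : ℕ → ℝ) (hpos : ∀ j ∈ Finset.Icc 1 N, 0 < h j)
    (a : ℝ)
    (xhalf xc hhalf : ℕ → ℝ)
    (hxhalf0 : xhalf 0 = a)
    (hxhalf : ∀ j ∈ Finset.Icc 1 N, xhalf j = xhalf (j - 1) + h j)
    (hxc : ∀ j ∈ Finset.Icc 1 N, xc j = xhalf (j - 1) + h j / 2)
    (hhhalf : ∀ j ∈ Finset.Icc 1 (N - 1), hhalf j = (h j + h (j + 1)) / 2)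
    (V W : ℝ → ℝ)
    (Q : ℝ → (ℕ → ℝ) → ℝ)
    (hQ : ∀ (x : ℝ) (v : ℕ → ℝ), Q x v =
      Real.exp (-V x - ∑ i ∈ Finset.Icc 1 N, h i * W (xc i - x) * v i))
    (ρn ρ1 : ℕ → ℝ) (τ : ℝ) (hτ : 0 < τ)
    (Mn Mnhalf : ℕ → ℝ)
    (hMn : ∀ j ∈ Finset.Icc 1 N, Mn j = Q (xc j) ρn)
    (hMnhalf : ∀ j ∈ Finset.Icc 1 (N - 1), Mnhalf j = Q (xhalf j) ρn)
    (C : ℕ → ℝ)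
    (hC : ∀ j ∈ Finset.Icc 1 (N - 1),
      C j = Mnhalf j / hhalf j * (ρ1 (j + 1) / Mn (j + 1) - ρ1 j / Mn j))
    (hC0 : C 0 = 0) (hCN : C N = 0)
    (hscheme : ∀ j ∈ Finset.Icc 1 N, (ρ1 j - ρn j) / τ = (C j - C (j - 1)) / h j)
    (hρ1pos : ∀ j ∈ Finset.Icc 1 N, 0 < ρ1 j)
    (Ih : ℝ)
    (hIh : Ih = ∑ j ∈ Finset.Icc 1 (N - 1),
      C j * (Real.log (ρ1 (j + 1) / Mn (j + 1)) - Real.log (ρ1 j / Mn j))) :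
    (∑ j ∈ Finset.Icc 1 N, h j * (ρ1 j - ρn j) * Real.log (ρ1 j / Mn j)) = -τ * Ih ∧
      0 ≤ Ih := by
  have hMnpos : ∀ j ∈ Finset.Icc 1 N, 0 < Mn j := by
    intro j hj; rw [hMn j hj, hQ]; exact Real.exp_pos _
  set L : ℕ → ℝ := fun j => Real.log (ρ1 j / Mn j) with hLdef
  -- termwise identity
  have hterm : ∀ j ∈ Finset.Icc 1 N,
      h j * (ρ1 j - ρn j) * L j = τ * ((C j - C (j - 1)) * L j) := by
    intro j hj
    have h1 := hscheme j hj
    have hh := (hpos j hj).ne'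
    have hτ' := hτ.ne'
    have h2 : h j * (ρ1 j - ρn j) = τ * (C j - C (j - 1)) := by
      field_simp at h1
      linarith [h1]
    calc h j * (ρ1 j - ρn j) * L j = (h j * (ρ1 j - ρn j)) * L j := by ring
      _ = (τ * (C j - C (j - 1))) * L j := by rw [h2]
      _ = τ * ((C j - C (j - 1)) * L j) := by ring
  -- sum identity via Abel summation
  have key : ∑ j ∈ Finset.Icc 1 N, (C j - C (j - 1)) * L j = -Ih := by
    have hr : ∑ j ∈ Finset.Icc 1 N, (C j - C (j - 1)) * L j
        = ∑ i ∈ Finset.range N, (C (i + 1) - C i) * L (i + 1) := by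
      rw [← Finset.Ico_add_one_right_eq_Icc, Finset.sum_Ico_eq_sum_range]
      apply Finset.sum_congr (by norm_num)
      intro i _
      have : 1 + i - 1 = i := by omega
      rw [this, add_comm 1 i]
    rw [hr]
    have e1 : ∑ i ∈ Finset.range N, (C (i + 1) - C i) * L (i + 1)
        = (∑ i ∈ Finset.range N, C (i + 1) * L (i + 1))
          - ∑ i ∈ Finset.range N, C i * L (i + 1) := by
      rw [← Finset.sum_sub_distrib]
      apply Finset.sum_congr rfl
      intro i _; ring
    have e2 : ∑ i ∈ Finset.range N, C (i + 1) * L (i + 1)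
        = (∑ i ∈ Finset.range N, C i * L i) + C N * L N - C 0 * L 0 := by
      have := Finset.sum_range_succ' (fun i => C i * L i) N
      have := Finset.sum_range_succ (fun i => C i * L i) N
      have hA : ∑ i ∈ Finset.range (N + 1), C i * L i
          = (∑ i ∈ Finset.range N, C (i + 1) * L (i + 1)) + C 0 * L 0 :=
        Finset.sum_range_succ' (fun i => C i * L i) N
      have hB : ∑ i ∈ Finset.range (N + 1), C i * L i
          = (∑ i ∈ Finset.range N, C i * L i) + C N * L N :=
        Finset.sum_range_succ (fun i => C i * L i) N
      linarith [hA, hB]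
    rw [e1, e2, hC0, hCN]
    have e3 : (∑ i ∈ Finset.range N, C i * L i)
        - ∑ i ∈ Finset.range N, C i * L (i + 1)
        = ∑ i ∈ Finset.range N, C i * (L i - L (i + 1)) := by
      rw [← Finset.sum_sub_distrib]
      apply Finset.sum_congr rfl
      intro i _; ring
    have hN1 : N - 1 + 1 = N := by omega
    have e4 : ∑ i ∈ Finset.range N, C i * (L i - L (i + 1))
        = (∑ i ∈ Finset.range (N - 1), C (i + 1) * (L (i + 1) - L (i + 2)))
          + C 0 * (L 0 - L 1) := by
      rw [← hN1]
      exact Finset.sum_range_succ' (fun i => C i * (L i - L (i + 1))) (N - 1)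
    have e5 : Ih = ∑ i ∈ Finset.range (N - 1), C (i + 1) * (L (i + 2) - L (i + 1)) := by
      rw [hIh, ← Finset.Ico_add_one_right_eq_Icc, Finset.sum_Ico_eq_sum_range]
      have hN2 : N - 1 + 1 - 1 = N - 1 := by omega
      rw [hN2]
      apply Finset.sum_congr rfl
      intro i _
      rw [add_comm 1 i]
    have e6 : ∑ i ∈ Finset.range (N - 1), C (i + 1) * (L (i + 1) - L (i + 2))
        = -∑ i ∈ Finset.range (N - 1), C (i + 1) * (L (i + 2) - L (i + 1)) := by
      rw [← Finset.sum_neg_distrib]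
      apply Finset.sum_congr rfl
      intro i _; ring
    have z1 : C 0 * L 0 = 0 := by rw [hC0]; ring
    have z2 : C 0 * (L 0 - L 1) = 0 := by rw [hC0]; ring
    linarith [e1, e2, e3, e4, e5, e6, z1, z2]
  constructor
  · rw [Finset.sum_congr rfl hterm, ← Finset.mul_sum, key]
    ring
  · rw [hIh]
    apply Finset.sum_nonneg
    intro j hj
    have hj' := Finset.mem_Icc.mp hj
    have hjN : j ∈ Finset.Icc 1 N := Finset.mem_Icc.mpr ⟨hj'.1, by omega⟩
    have hj1N : j + 1 ∈ Finset.Icc 1 N := Finset.mem_Icc.mpr ⟨by omega, by omega⟩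
    have hr1 : 0 < ρ1 j / Mn j := div_pos (hρ1pos j hjN) (hMnpos j hjN)
    have hr2 : 0 < ρ1 (j + 1) / Mn (j + 1) :=
      div_pos (hρ1pos _ hj1N) (hMnpos _ hj1N)
    have hk : 0 < Mnhalf j / hhalf j := by
      apply div_pos
      · rw [hMnhalf j hj, hQ]; exact Real.exp_pos _
      · rw [hhhalf j hj]
        have := hpos j hjN
        have := hpos (j + 1) hj1N
        linarith
    rw [hC j hj, mul_assoc]
    apply mul_nonneg hk.le
    rcases le_total (ρ1 j / Mn j) (ρ1 (j + 1) / Mn (j + 1)) with hle | hle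
    · have hlog := Real.log_le_log hr1 hle
      have h1 : 0 ≤ ρ1 (j + 1) / Mn (j + 1) - ρ1 j / Mn j := by linarith
      have h2 : 0 ≤ Real.log (ρ1 (j + 1) / Mn (j + 1)) - Real.log (ρ1 j / Mn j) := by
        linarith
      exact mul_nonneg h1 h2
    · have hlog := Real.log_le_log hr2 hle
      have h1 : ρ1 (j + 1) / Mn (j + 1) - ρ1 j / Mn j ≤ 0 := by linarith
      have h2 : Real.log (ρ1 (j + 1) / Mn (j + 1)) - Real.log (ρ1 j / Mn j) ≤ 0 := by
        linarith
      nlinarith [mul_nonneg (neg_nonneg.mpr h1) (neg_nonneg.mpr h2)]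
end

section
/- Zero entropy production characterizes steady states of the 1D fully discrete scheme: if ρ^{n+1} ∈ ℝ^N satisfies the fully discrete scheme with data ρ^n ∈ ℝ^N and τ > 0, ρ^{n+1}_j > 0 for all j, and Σ_{j=1}^N h_j (ρ^{n+1}_j − ρ^n_j) · log(ρ^{n+1}_j/M^n_j) = 0, then ρ^{n+1}_j = ρ^n_j for all 1 ≤ j ≤ N. -/
lemma abel_aux (n : ℕ) (C f : ℕ → ℝ) :
    ∑ j ∈ Finset.Icc 1 (n + 1), (C j - C (j - 1)) * f j
      = C (n + 1) * f (n + 1) - C 0 * f 1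
        + ∑ j ∈ Finset.Icc 1 n, C j * (f j - f (j + 1)) := by
  induction n with
  | zero => simp [Finset.Icc_self]; ring
  | succ m ih =>
      rw [Finset.sum_Icc_succ_top (by omega : 1 ≤ m + 2), ih,
          Finset.sum_Icc_succ_top (by omega : 1 ≤ m + 1)]
      simp only [Nat.add_sub_cancel]
      ring

lemma diff_log_nonneg {x y : ℝ} (hx : 0 < x) (hy : 0 < y) :
    0 ≤ (y - x) * (Real.log y - Real.log x) := by
  rcases le_total x y with hxy | hxy
  · exact mul_nonneg (by linarith) (by linarith [Real.log_le_log hx hxy])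
  · have := Real.log_le_log hy hxy
    have h1 : y - x ≤ 0 := by linarith
    have h2 : Real.log y - Real.log x ≤ 0 := by linarith
    nlinarith

lemma diff_log_eq_zero {x y : ℝ} (hx : 0 < x) (hy : 0 < y)
    (hz : (y - x) * (Real.log y - Real.log x) = 0) : y = x := by
  rcases lt_trichotomy x y with hlt | heq | hlt
  · have := Real.log_lt_log hx hlt
    nlinarith
  · exact heq.symm
  · have := Real.log_lt_log hy hlt
    nlinarith

theorem zero_entropy_production_steady_state_1d
    (N : ℕ) (hN : 2 ≤ N)
    (h : ℕ → ℝ) (hpos : ∀ j ∈ Finset.Icc 1 N, 0 < h j)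
    (a : ℝ)
    (xhalf xc hhalf : ℕ → ℝ)
    (hxhalf0 : xhalf 0 = a)
    (hxhalf : ∀ j ∈ Finset.Icc 1 N, xhalf j = xhalf (j - 1) + h j)
    (hxc : ∀ j ∈ Finset.Icc 1 N, xc j = xhalf (j - 1) + h j / 2)
    (hhhalf : ∀ j ∈ Finset.Icc 1 (N - 1), hhalf j = (h j + h (j + 1)) / 2)
    (V W : ℝ → ℝ)
    (Q : ℝ → (ℕ → ℝ) → ℝ)
    (hQ : ∀ (x : ℝ) (v : ℕ → ℝ), Q x v =
      Real.exp (-V x - ∑ i ∈ Finset.Icc 1 N, h i * W (xc i - x) * v i))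
    (ρn ρ1 : ℕ → ℝ) (τ : ℝ) (hτ : 0 < τ)
    (Mn Mnhalf : ℕ → ℝ)
    (hMn : ∀ j ∈ Finset.Icc 1 N, Mn j = Q (xc j) ρn)
    (hMnhalf : ∀ j ∈ Finset.Icc 1 (N - 1), Mnhalf j = Q (xhalf j) ρn)
    (C : ℕ → ℝ)
    (hC : ∀ j ∈ Finset.Icc 1 (N - 1),
      C j = Mnhalf j / hhalf j * (ρ1 (j + 1) / Mn (j + 1) - ρ1 j / Mn j))
    (hC0 : C 0 = 0) (hCN : C N = 0)
    (hscheme : ∀ j ∈ Finset.Icc 1 N, (ρ1 j - ρn j) / τ = (C j - C (j - 1)) / h j)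
    (hρ1pos : ∀ j ∈ Finset.Icc 1 N, 0 < ρ1 j)
    (hzero : ∑ j ∈ Finset.Icc 1 N, h j * (ρ1 j - ρn j) * Real.log (ρ1 j / Mn j) = 0) :
    ∀ j ∈ Finset.Icc 1 N, ρ1 j = ρn j := by
  have hMnpos : ∀ j ∈ Finset.Icc 1 N, 0 < Mn j := by
    intro j hj; rw [hMn j hj, hQ]; exact Real.exp_pos _
  have hMnhalfpos : ∀ j ∈ Finset.Icc 1 (N - 1), 0 < Mnhalf j := by
    intro j hj; rw [hMnhalf j hj, hQ]; exact Real.exp_pos _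
  have hhhalfpos : ∀ j ∈ Finset.Icc 1 (N - 1), 0 < hhalf j := by
    intro j hj
    simp only [Finset.mem_Icc] at hj
    have h1 : 0 < h j := hpos j (Finset.mem_Icc.2 ⟨hj.1, by omega⟩)
    have h2 : 0 < h (j + 1) := hpos (j + 1) (Finset.mem_Icc.2 ⟨by omega, by omega⟩)
    rw [hhhalf j (Finset.mem_Icc.2 hj)]; linarith
  have hupos : ∀ j ∈ Finset.Icc 1 N, 0 < ρ1 j / Mn j := by
    intro j hj; exact div_pos (hρ1pos j hj) (hMnpos j hj)
  -- rewrite the scheme as an identity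
  have key : ∀ j ∈ Finset.Icc 1 N, h j * (ρ1 j - ρn j) = τ * (C j - C (j - 1)) := by
    intro j hj
    have hs := hscheme j hj
    have hhj := hpos j hj
    field_simp at hs
    linarith
  set f : ℕ → ℝ := fun j => Real.log (ρ1 j / Mn j) with hf
  have hzero' : ∑ j ∈ Finset.Icc 1 N, (C j - C (j - 1)) * f j = 0 := by
    have : ∑ j ∈ Finset.Icc 1 N, h j * (ρ1 j - ρn j) * Real.log (ρ1 j / Mn j)
        = τ * ∑ j ∈ Finset.Icc 1 N, (C j - C (j - 1)) * f j := by
      rw [Finset.mul_sum]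
      refine Finset.sum_congr rfl fun j hj => ?_
      rw [key j hj]; ring
    rw [this] at hzero
    exact (mul_eq_zero.mp hzero).resolve_left (ne_of_gt hτ)
  have hNsub : N - 1 + 1 = N := by omega
  have habel : ∑ j ∈ Finset.Icc 1 (N - 1), C j * (f j - f (j + 1)) = 0 := by
    have := abel_aux (N - 1) C f
    rw [hNsub] at this
    rw [this, hC0, hCN] at hzero'
    linarith
  -- each term is nonpositive
  have hterm_nonpos : ∀ j ∈ Finset.Icc 1 (N - 1), C j * (f j - f (j + 1)) ≤ 0 := by
    intro j hj
    simp only [Finset.mem_Icc] at hj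
    have hjN : j ∈ Finset.Icc 1 N := Finset.mem_Icc.2 ⟨hj.1, by omega⟩
    have hj1N : j + 1 ∈ Finset.Icc 1 N := Finset.mem_Icc.2 ⟨by omega, by omega⟩
    have hu := hupos j hjN
    have hu' := hupos (j + 1) hj1N
    have hM := hMnhalfpos j (Finset.mem_Icc.2 hj)
    have hh := hhhalfpos j (Finset.mem_Icc.2 hj)
    rw [hC j (Finset.mem_Icc.2 hj)]
    have hnn := diff_log_nonneg hu hu'
    have hMh : 0 < Mnhalf j / hhalf j := div_pos hM hh
    have : Mnhalf j / hhalf j * (ρ1 (j + 1) / Mn (j + 1) - ρ1 j / Mn j) * (f j - f (j + 1))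
        = -(Mnhalf j / hhalf j * ((ρ1 (j + 1) / Mn (j + 1) - ρ1 j / Mn j)
            * (Real.log (ρ1 (j + 1) / Mn (j + 1)) - Real.log (ρ1 j / Mn j)))) := by
      simp only [hf]; ring
    rw [this]
    have := mul_nonneg hMh.le hnn
    linarith
  -- sum of nonpositive terms is zero, so each term is zero, so each C j = 0
  have hCzero : ∀ j ∈ Finset.Icc 1 (N - 1), C j = 0 := by
    intro j hj
    have hterm0 : C j * (f j - f (j + 1)) = 0 := by
      have hneg : ∑ j ∈ Finset.Icc 1 (N - 1), -(C j * (f j - f (j + 1))) = 0 := by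
        rw [Finset.sum_neg_distrib, habel, neg_zero]
      have := (Finset.sum_eq_zero_iff_of_nonneg
        (fun i hi => by linarith [hterm_nonpos i hi])).mp hneg j hj
      linarith
    simp only [Finset.mem_Icc] at hj
    have hjN : j ∈ Finset.Icc 1 N := Finset.mem_Icc.2 ⟨hj.1, by omega⟩
    have hj1N : j + 1 ∈ Finset.Icc 1 N := Finset.mem_Icc.2 ⟨by omega, by omega⟩
    have hu := hupos j hjN
    have hu' := hupos (j + 1) hj1N
    have hM := hMnhalfpos j (Finset.mem_Icc.2 hj)
    have hh := hhhalfpos j (Finset.mem_Icc.2 hj)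
    have hMh : Mnhalf j / hhalf j ≠ 0 := ne_of_gt (div_pos hM hh)
    have hprod : (ρ1 (j + 1) / Mn (j + 1) - ρ1 j / Mn j)
        * (Real.log (ρ1 (j + 1) / Mn (j + 1)) - Real.log (ρ1 j / Mn j)) = 0 := by
      rw [hC j (Finset.mem_Icc.2 hj)] at hterm0
      have heq : Mnhalf j / hhalf j * ((ρ1 (j + 1) / Mn (j + 1) - ρ1 j / Mn j)
          * (Real.log (ρ1 (j + 1) / Mn (j + 1)) - Real.log (ρ1 j / Mn j))) = 0 := by
        simp only [hf] at hterm0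
        nlinarith [hterm0]
      exact (mul_eq_zero.mp heq).resolve_left hMh
    have hueq : ρ1 (j + 1) / Mn (j + 1) = ρ1 j / Mn j := diff_log_eq_zero hu hu' hprod
    rw [hC j (Finset.mem_Icc.2 hj), hueq, sub_self, mul_zero]
  -- conclude
  intro j hj
  have hk := key j hj
  simp only [Finset.mem_Icc] at hj
  have hCj : C j = 0 := by
    rcases eq_or_lt_of_le hj.2 with hEq | hlt
    · rw [hEq]; exact hCN
    · exact hCzero j (Finset.mem_Icc.2 ⟨hj.1, by omega⟩)
  have hCj1 : C (j - 1) = 0 := by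
    rcases Nat.eq_or_lt_of_le hj.1 with hEq | hlt
    · rw [← hEq]; simpa using hC0
    · exact hCzero (j - 1) (Finset.mem_Icc.2 ⟨by omega, by omega⟩)
  rw [hCj, hCj1, sub_zero, mul_zero] at hk
  have hhj := hpos j (Finset.mem_Icc.2 hj)
  have : ρ1 j - ρn j = 0 := by
    rcases mul_eq_zero.mp hk with h1 | h2
    · exact absurd h1 (ne_of_gt hhj)
    · exact h2
  linarith
end

section
/- Positivity preservation for the 2D semi-discrete scheme: if ρ : [0,∞) → ℝ^{N_x×N_y} is a solution of the 2D semi-discrete scheme and ρ_{i,j}(0) ≥ 0 for all i, j, then ρ_{i,j}(t) ≥ 0 for all t ≥ 0 and all i, j. -/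
set_option maxHeartbeats 1000000 in
theorem semi_discrete_positivity_2d
    (Nx Ny : ℕ) (hNx : 2 ≤ Nx) (hNy : 2 ≤ Ny)
    (hx : ℕ → ℝ) (hxpos : ∀ i ∈ Finset.Icc 1 Nx, 0 < hx i)
    (hy : ℕ → ℝ) (hypos : ∀ j ∈ Finset.Icc 1 Ny, 0 < hy j)
    (a c : ℝ)
    (xhalf xc hxhalf : ℕ → ℝ) (yhalf yc hyhalf : ℕ → ℝ)
    (hxhalf0 : xhalf 0 = a)
    (hxhalfdef : ∀ i ∈ Finset.Icc 1 Nx, xhalf i = xhalf (i - 1) + hx i)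
    (hxcdef : ∀ i ∈ Finset.Icc 1 Nx, xc i = xhalf (i - 1) + hx i / 2)
    (hhxhalf : ∀ i ∈ Finset.Icc 1 (Nx - 1), hxhalf i = (hx i + hx (i + 1)) / 2)
    (hyhalf0 : yhalf 0 = c)
    (hyhalfdef : ∀ j ∈ Finset.Icc 1 Ny, yhalf j = yhalf (j - 1) + hy j)
    (hycdef : ∀ j ∈ Finset.Icc 1 Ny, yc j = yhalf (j - 1) + hy j / 2)
    (hhyhalf : ∀ j ∈ Finset.Icc 1 (Ny - 1), hyhalf j = (hy j + hy (j + 1)) / 2)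
    (V W : ℝ → ℝ → ℝ)
    (Q : ℝ → ℝ → (ℕ → ℕ → ℝ) → ℝ)
    (hQ : ∀ (x y : ℝ) (v : ℕ → ℕ → ℝ), Q x y v =
      Real.exp (-V x y - ∑ k ∈ Finset.Icc 1 Nx, ∑ l ∈ Finset.Icc 1 Ny,
        hx k * hy l * W (xc k - x) (yc l - y) * v k l))
    (ρ : ℝ → ℕ → ℕ → ℝ)
    (M Mxh Myh Cx Cy : ℝ → ℕ → ℕ → ℝ)
    (hM : ∀ t : ℝ, ∀ i ∈ Finset.Icc 1 Nx, ∀ j ∈ Finset.Icc 1 Ny,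
      M t i j = Q (xc i) (yc j) (ρ t))
    (hMxh : ∀ t : ℝ, ∀ i ∈ Finset.Icc 1 (Nx - 1), ∀ j ∈ Finset.Icc 1 Ny,
      Mxh t i j = Q (xhalf i) (yc j) (ρ t))
    (hMyh : ∀ t : ℝ, ∀ i ∈ Finset.Icc 1 Nx, ∀ j ∈ Finset.Icc 1 (Ny - 1),
      Myh t i j = Q (xc i) (yhalf j) (ρ t))
    (hCx : ∀ t : ℝ, ∀ i ∈ Finset.Icc 1 (Nx - 1), ∀ j ∈ Finset.Icc 1 Ny,
      Cx t i j = Mxh t i j / hxhalf i * (ρ t (i + 1) j / M t (i + 1) j - ρ t i j / M t i j))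
    (hCy : ∀ t : ℝ, ∀ i ∈ Finset.Icc 1 Nx, ∀ j ∈ Finset.Icc 1 (Ny - 1),
      Cy t i j = Myh t i j / hyhalf j * (ρ t i (j + 1) / M t i (j + 1) - ρ t i j / M t i j))
    (hCx0 : ∀ t : ℝ, ∀ j : ℕ, Cx t 0 j = 0) (hCxN : ∀ t : ℝ, ∀ j : ℕ, Cx t Nx j = 0)
    (hCy0 : ∀ t : ℝ, ∀ i : ℕ, Cy t i 0 = 0) (hCyN : ∀ t : ℝ, ∀ i : ℕ, Cy t i Ny = 0)
    (hode : ∀ i ∈ Finset.Icc 1 Nx, ∀ j ∈ Finset.Icc 1 Ny, ∀ t : ℝ, 0 ≤ t →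
      HasDerivWithinAt (fun s => ρ s i j)
        ((Cx t i j - Cx t (i - 1) j) / hx i + (Cy t i j - Cy t i (j - 1)) / hy j)
        (Set.Ici 0) t)
    (hinit : ∀ i ∈ Finset.Icc 1 Nx, ∀ j ∈ Finset.Icc 1 Ny, 0 ≤ ρ 0 i j) :
    ∀ t : ℝ, 0 ≤ t → ∀ i ∈ Finset.Icc 1 Nx, ∀ j ∈ Finset.Icc 1 Ny, 0 ≤ ρ t i j := by
  -- positivity of Q and the M's
  have hQpos : ∀ (x y : ℝ) (v : ℕ → ℕ → ℝ), 0 < Q x y v := by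
    intro x y v; rw [hQ]; exact Real.exp_pos _
  have hMpos : ∀ t : ℝ, ∀ i ∈ Finset.Icc 1 Nx, ∀ j ∈ Finset.Icc 1 Ny, 0 < M t i j := by
    intro t i hi j hj; rw [hM t i hi j hj]; exact hQpos _ _ _
  have hMxhpos : ∀ t : ℝ, ∀ i ∈ Finset.Icc 1 (Nx - 1), ∀ j ∈ Finset.Icc 1 Ny, 0 < Mxh t i j := by
    intro t i hi j hj; rw [hMxh t i hi j hj]; exact hQpos _ _ _
  have hMyhpos : ∀ t : ℝ, ∀ i ∈ Finset.Icc 1 Nx, ∀ j ∈ Finset.Icc 1 (Ny - 1), 0 < Myh t i j := by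
    intro t i hi j hj; rw [hMyh t i hi j hj]; exact hQpos _ _ _
  have hhxhalfpos : ∀ i ∈ Finset.Icc 1 (Nx - 1), 0 < hxhalf i := by
    intro i hi
    rw [hhxhalf i hi]
    rw [Finset.mem_Icc] at hi
    have h1 : 0 < hx i := hxpos i (by rw [Finset.mem_Icc]; omega)
    have h2 : 0 < hx (i + 1) := hxpos (i + 1) (by rw [Finset.mem_Icc]; omega)
    linarith
  have hhyhalfpos : ∀ j ∈ Finset.Icc 1 (Ny - 1), 0 < hyhalf j := by
    intro j hj
    rw [hhyhalf j hj]
    rw [Finset.mem_Icc] at hj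
    have h1 : 0 < hy j := hypos j (by rw [Finset.mem_Icc]; omega)
    have h2 : 0 < hy (j + 1) := hypos (j + 1) (by rw [Finset.mem_Icc]; omega)
    linarith
  -- continuity of ρ
  have hρcont : ∀ i ∈ Finset.Icc 1 Nx, ∀ j ∈ Finset.Icc 1 Ny,
      ContinuousOn (fun s => ρ s i j) (Set.Ici 0) := fun i hi j hj t ht =>
    (hode i hi j hj t ht).continuousWithinAt
  -- continuity of Q along ρ
  have hQcont : ∀ x y : ℝ, ContinuousOn (fun t => Q x y (ρ t)) (Set.Ici 0) := by
    intro x y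
    have hrw : (fun t => Q x y (ρ t)) = fun t =>
        Real.exp (-V x y - ∑ k ∈ Finset.Icc 1 Nx, ∑ l ∈ Finset.Icc 1 Ny,
          hx k * hy l * W (xc k - x) (yc l - y) * ρ t k l) :=
      funext fun t => hQ x y (ρ t)
    rw [hrw]
    apply Real.continuous_exp.comp_continuousOn
    apply ContinuousOn.sub continuousOn_const
    apply continuousOn_finset_sum
    intro k hk
    apply continuousOn_finset_sum
    intro l hl
    exact continuousOn_const.mul (hρcont k hk l hl)
  -- main goal
  intro t1 ht1 i1 hi1 j1 hj1
  have hIccsub : Set.Icc (0:ℝ) t1 ⊆ Set.Ici 0 := fun s hs => hs.1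
  -- continuity of the M's on [0, t1]
  have hMcont : ∀ i ∈ Finset.Icc 1 Nx, ∀ j ∈ Finset.Icc 1 Ny,
      ContinuousOn (fun t => M t i j) (Set.Icc 0 t1) := by
    intro i hi j hj
    have : (fun t => M t i j) = fun t => Q (xc i) (yc j) (ρ t) :=
      funext fun t => hM t i hi j hj
    rw [this]; exact (hQcont _ _).mono hIccsub
  have hMxhcont : ∀ i ∈ Finset.Icc 1 (Nx - 1), ∀ j ∈ Finset.Icc 1 Ny,
      ContinuousOn (fun t => Mxh t i j) (Set.Icc 0 t1) := by
    intro i hi j hj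
    have : (fun t => Mxh t i j) = fun t => Q (xhalf i) (yc j) (ρ t) :=
      funext fun t => hMxh t i hi j hj
    rw [this]; exact (hQcont _ _).mono hIccsub
  have hMyhcont : ∀ i ∈ Finset.Icc 1 Nx, ∀ j ∈ Finset.Icc 1 (Ny - 1),
      ContinuousOn (fun t => Myh t i j) (Set.Icc 0 t1) := by
    intro i hi j hj
    have : (fun t => Myh t i j) = fun t => Q (xc i) (yhalf j) (ρ t) :=
      funext fun t => hMyh t i hi j hj
    rw [this]; exact (hQcont _ _).mono hIccsub
  -- the coefficient function
    -- tm t i j : sum of the off-diagonal coefficients at (i,j)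
  set tm : ℝ → ℕ → ℕ → ℝ := fun t i j =>
      (if i < Nx then Mxh t i j / (hxhalf i * M t (i + 1) j) else 0) / hx i
      + (if 1 < i then Mxh t (i - 1) j / (hxhalf (i - 1) * M t (i - 1) j) else 0) / hx i
      + (if j < Ny then Myh t i j / (hyhalf j * M t i (j + 1)) else 0) / hy j
      + (if 1 < j then Myh t i (j - 1) / (hyhalf (j - 1) * M t i (j - 1)) else 0) / hy j
    with htm
  have htm_nonneg : ∀ t : ℝ, ∀ i ∈ Finset.Icc 1 Nx, ∀ j ∈ Finset.Icc 1 Ny, 0 ≤ tm t i j := by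
    intro t i hi j hj
    have hxi : 0 < hx i := hxpos i hi
    have hyj : 0 < hy j := hypos j hj
    rw [Finset.mem_Icc] at hi hj
    have h1 : 0 ≤ (if i < Nx then Mxh t i j / (hxhalf i * M t (i + 1) j) else 0) := by
      by_cases h : i < Nx
      · rw [if_pos h]
        have hm : i ∈ Finset.Icc 1 (Nx - 1) := by rw [Finset.mem_Icc]; omega
        have := hMxhpos t i hm j (by rw [Finset.mem_Icc]; omega)
        have := hhxhalfpos i hm
        have := hMpos t (i + 1) (by rw [Finset.mem_Icc]; omega) j (by rw [Finset.mem_Icc]; omega)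
        positivity
      · rw [if_neg h]
    have h2 : 0 ≤ (if 1 < i then Mxh t (i - 1) j / (hxhalf (i - 1) * M t (i - 1) j) else 0) := by
      by_cases h : 1 < i
      · rw [if_pos h]
        have hm : i - 1 ∈ Finset.Icc 1 (Nx - 1) := by rw [Finset.mem_Icc]; omega
        have := hMxhpos t (i - 1) hm j (by rw [Finset.mem_Icc]; omega)
        have := hhxhalfpos (i - 1) hm
        have := hMpos t (i - 1) (by rw [Finset.mem_Icc]; omega) j (by rw [Finset.mem_Icc]; omega)
        positivity
      · rw [if_neg h]
    have h3 : 0 ≤ (if j < Ny then Myh t i j / (hyhalf j * M t i (j + 1)) else 0) := by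
      by_cases h : j < Ny
      · rw [if_pos h]
        have hm : j ∈ Finset.Icc 1 (Ny - 1) := by rw [Finset.mem_Icc]; omega
        have := hMyhpos t i (by rw [Finset.mem_Icc]; omega) j hm
        have := hhyhalfpos j hm
        have := hMpos t i (by rw [Finset.mem_Icc]; omega) (j + 1) (by rw [Finset.mem_Icc]; omega)
        positivity
      · rw [if_neg h]
    have h4 : 0 ≤ (if 1 < j then Myh t i (j - 1) / (hyhalf (j - 1) * M t i (j - 1)) else 0) := by
      by_cases h : 1 < j
      · rw [if_pos h]
        have hm : j - 1 ∈ Finset.Icc 1 (Ny - 1) := by rw [Finset.mem_Icc]; omega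
        have := hMyhpos t i (by rw [Finset.mem_Icc]; omega) (j - 1) hm
        have := hhyhalfpos (j - 1) hm
        have := hMpos t i (by rw [Finset.mem_Icc]; omega) (j - 1) (by rw [Finset.mem_Icc]; omega)
        positivity
      · rw [if_neg h]
    simp only [htm]
    exact add_nonneg (add_nonneg (add_nonneg (div_nonneg h1 hxi.le) (div_nonneg h2 hxi.le))
      (div_nonneg h3 hyj.le)) (div_nonneg h4 hyj.le)
  -- G : total coefficient function; continuous on [0,t1], hence bounded
  set G : ℝ → ℝ := fun t => ∑ i ∈ Finset.Icc 1 Nx, ∑ j ∈ Finset.Icc 1 Ny, tm t i j with hG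
  have hGcont : ContinuousOn G (Set.Icc 0 t1) := by
    apply continuousOn_finset_sum
    intro i hi
    apply continuousOn_finset_sum
    intro j hj
    have hi' := hi; have hj' := hj
    rw [Finset.mem_Icc] at hi' hj'
    simp only [htm]
    have c1 : ContinuousOn (fun t => (if i < Nx then Mxh t i j / (hxhalf i * M t (i + 1) j) else 0) / hx i) (Set.Icc 0 t1) := by
      apply ContinuousOn.div_const
      by_cases h : i < Nx
      · simp only [if_pos h]
        have hm : i ∈ Finset.Icc 1 (Nx - 1) := by rw [Finset.mem_Icc]; omega
        have hm1 : i + 1 ∈ Finset.Icc 1 Nx := by rw [Finset.mem_Icc]; omega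
        exact (hMxhcont i hm j hj).div (continuousOn_const.mul (hMcont (i + 1) hm1 j hj))
          (fun t ht => ne_of_gt (mul_pos (hhxhalfpos i hm) (hMpos t (i + 1) hm1 j hj)))
      · simp only [if_neg h]; exact continuousOn_const
    have c2 : ContinuousOn (fun t => (if 1 < i then Mxh t (i - 1) j / (hxhalf (i - 1) * M t (i - 1) j) else 0) / hx i) (Set.Icc 0 t1) := by
      apply ContinuousOn.div_const
      by_cases h : 1 < i
      · simp only [if_pos h]
        have hm : i - 1 ∈ Finset.Icc 1 (Nx - 1) := by rw [Finset.mem_Icc]; omega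
        have hm1 : i - 1 ∈ Finset.Icc 1 Nx := by rw [Finset.mem_Icc]; omega
        exact (hMxhcont (i - 1) hm j hj).div (continuousOn_const.mul (hMcont (i - 1) hm1 j hj))
          (fun t ht => ne_of_gt (mul_pos (hhxhalfpos (i - 1) hm) (hMpos t (i - 1) hm1 j hj)))
      · simp only [if_neg h]; exact continuousOn_const
    have c3 : ContinuousOn (fun t => (if j < Ny then Myh t i j / (hyhalf j * M t i (j + 1)) else 0) / hy j) (Set.Icc 0 t1) := by
      apply ContinuousOn.div_const
      by_cases h : j < Ny
      · simp only [if_pos h]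
        have hm : j ∈ Finset.Icc 1 (Ny - 1) := by rw [Finset.mem_Icc]; omega
        have hm1 : j + 1 ∈ Finset.Icc 1 Ny := by rw [Finset.mem_Icc]; omega
        exact (hMyhcont i hi j hm).div (continuousOn_const.mul (hMcont i hi (j + 1) hm1))
          (fun t ht => ne_of_gt (mul_pos (hhyhalfpos j hm) (hMpos t i hi (j + 1) hm1)))
      · simp only [if_neg h]; exact continuousOn_const
    have c4 : ContinuousOn (fun t => (if 1 < j then Myh t i (j - 1) / (hyhalf (j - 1) * M t i (j - 1)) else 0) / hy j) (Set.Icc 0 t1) := by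
      apply ContinuousOn.div_const
      by_cases h : 1 < j
      · simp only [if_pos h]
        have hm : j - 1 ∈ Finset.Icc 1 (Ny - 1) := by rw [Finset.mem_Icc]; omega
        have hm1 : j - 1 ∈ Finset.Icc 1 Ny := by rw [Finset.mem_Icc]; omega
        exact (hMyhcont i hi (j - 1) hm).div (continuousOn_const.mul (hMcont i hi (j - 1) hm1))
          (fun t ht => ne_of_gt (mul_pos (hhyhalfpos (j - 1) hm) (hMpos t i hi (j - 1) hm1)))
      · simp only [if_neg h]; exact continuousOn_const
    exact ((c1.add c2).add c3).add c4
  obtain ⟨tmax, htmax, hCbound'⟩ :=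
    isCompact_Icc.exists_isMaxOn (Set.nonempty_Icc.mpr ht1) hGcont
  have hCbound : ∀ t ∈ Set.Icc (0:ℝ) t1, G t ≤ G tmax := fun t ht => hCbound' ht
  set C : ℝ := G tmax with hCdef
  have htm_le_C : ∀ t ∈ Set.Icc (0:ℝ) t1, ∀ i ∈ Finset.Icc 1 Nx, ∀ j ∈ Finset.Icc 1 Ny,
      tm t i j ≤ C := by
    intro t ht i hi j hj
    calc tm t i j ≤ ∑ l ∈ Finset.Icc 1 Ny, tm t i l :=
          Finset.single_le_sum (fun l hl => htm_nonneg t i hi l hl) hj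
      _ ≤ G t := Finset.single_le_sum
          (f := fun k => ∑ l ∈ Finset.Icc 1 Ny, tm t k l)
          (fun k hk => Finset.sum_nonneg fun l hl => htm_nonneg t k hk l hl) hi
      _ ≤ C := hCbound t ht
  set K : ℝ := C + 1 with hK
  -- key claim
  have key : ∀ ε : ℝ, 0 < ε → ∀ s ∈ Set.Icc (0:ℝ) t1, ∀ i ∈ Finset.Icc 1 Nx,
      ∀ j ∈ Finset.Icc 1 Ny, 0 < ρ s i j + ε * Real.exp (K * s) := by
    intro ε hε
    by_contra hcon
    push_neg at hcon
    obtain ⟨s0, hs0, i0', hi0', j0', hj0', hneg⟩ := hcon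
    set S : Set ℝ := {s : ℝ | s ∈ Set.Icc (0:ℝ) t1 ∧ ∃ i ∈ Finset.Icc 1 Nx,
        ∃ j ∈ Finset.Icc 1 Ny, ρ s i j + ε * Real.exp (K * s) ≤ 0} with hSdef
    have hSne : S.Nonempty := ⟨s0, hs0, i0', hi0', j0', hj0', hneg⟩
    have hφcont : ∀ i ∈ Finset.Icc 1 Nx, ∀ j ∈ Finset.Icc 1 Ny,
        ContinuousOn (fun s => ρ s i j + ε * Real.exp (K * s)) (Set.Icc 0 t1) := by
      intro i hi j hj
      exact ((hρcont i hi j hj).mono hIccsub).add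
        (Continuous.continuousOn (by fun_prop))
    have hSclosed : IsClosed S := by
      have hSeq : S = ⋃ i ∈ Finset.Icc 1 Nx, ⋃ j ∈ Finset.Icc 1 Ny,
          (Set.Icc (0:ℝ) t1 ∩ (fun s => ρ s i j + ε * Real.exp (K * s)) ⁻¹' Set.Iic 0) := by
        ext s
        simp only [hSdef, Set.mem_setOf_eq, Set.mem_iUnion, Set.mem_inter_iff,
          Set.mem_preimage, Set.mem_Iic, exists_prop]
        constructor
        · rintro ⟨h1, i, hi, j, hj, h2⟩; exact ⟨i, hi, j, hj, h1, h2⟩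
        · rintro ⟨i, hi, j, hj, h1, h2⟩; exact ⟨h1, i, hi, j, hj, h2⟩
      rw [hSeq]
      exact isClosed_biUnion_finset fun i hi => isClosed_biUnion_finset fun j hj =>
        (hφcont i hi j hj).preimage_isClosed_of_isClosed isClosed_Icc isClosed_Iic
    have hSbdd : BddBelow S := ⟨0, fun s hs => hs.1.1⟩
    set t0 : ℝ := sInf S with ht0def
    have ht0S : t0 ∈ S := hSclosed.csInf_mem hSne hSbdd
    obtain ⟨ht0Icc, i0, hi0, j0, hj0, hle0⟩ := ht0S
    have ht0pos : 0 < t0 := by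
      rcases lt_or_eq_of_le ht0Icc.1 with h | h
      · exact h
      · exfalso
        have h0 : ρ 0 i0 j0 + ε * Real.exp (K * 0) ≤ 0 := by rw [← h] at hle0; exact hle0
        have := hinit i0 hi0 j0 hj0
        rw [mul_zero, Real.exp_zero, mul_one] at h0
        linarith
    have hlower : ∀ s : ℝ, 0 ≤ s → s < t0 → ∀ i ∈ Finset.Icc 1 Nx, ∀ j ∈ Finset.Icc 1 Ny,
        0 < ρ s i j + ε * Real.exp (K * s) := by
      intro s hs hst i hi j hj
      by_contra hc
      push_neg at hc
      have hsS : s ∈ S := ⟨⟨hs, le_trans hst.le ht0Icc.2⟩, i, hi, j, hj, hc⟩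
      exact absurd (csInf_le hSbdd hsS) (not_le.mpr hst)
    -- filter facts
    have hfne : (nhdsWithin t0 (Set.Ico (0:ℝ) t0)).NeBot := by
      have h1 : Set.Ico (0:ℝ) t0 = Set.Ici (0:ℝ) ∩ Set.Iio t0 := (Set.Ici_inter_Iio).symm
      rw [h1, nhdsWithin_inter_of_mem (mem_nhdsWithin_of_mem_nhds (Ici_mem_nhds ht0pos))]
      exact nhdsLT_neBot t0
    have hfle : nhdsWithin t0 (Set.Ico (0:ℝ) t0) ≤ nhdsWithin t0 (Set.Ici 0 \ {t0}) :=
      nhdsWithin_mono _ (fun s hs => ⟨hs.1, ne_of_lt hs.2⟩)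
    -- all components are ≥ -η at t0
    have hφt0 : ∀ i ∈ Finset.Icc 1 Nx, ∀ j ∈ Finset.Icc 1 Ny,
        0 ≤ ρ t0 i j + ε * Real.exp (K * t0) := by
      intro i hi j hj
      have hct : ContinuousWithinAt (fun s => ρ s i j + ε * Real.exp (K * s)) (Set.Ici 0) t0 :=
        ((hρcont i hi j hj t0 ht0pos.le).add
          (Continuous.continuousWithinAt (by fun_prop)))
      have htd : Filter.Tendsto (fun s => ρ s i j + ε * Real.exp (K * s))
          (nhdsWithin t0 (Set.Ico (0:ℝ) t0)) (nhds (ρ t0 i j + ε * Real.exp (K * t0))) :=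
        hct.tendsto.mono_left (nhdsWithin_mono _ (fun s hs => hs.1))
      refine ge_of_tendsto htd ?_
      filter_upwards [eventually_mem_nhdsWithin] with s hs
      exact (hlower s hs.1 hs.2 i hi j hj).le
    set η : ℝ := ε * Real.exp (K * t0) with hηdef
    have hηpos : 0 < η := by positivity
    have hρt0 : ρ t0 i0 j0 = -η := le_antisymm (by linarith) (by have := hφt0 i0 hi0 j0 hj0; linarith)
    -- derivative of φ at t0
    set Dval : ℝ := (Cx t0 i0 j0 - Cx t0 (i0 - 1) j0) / hx i0
        + (Cy t0 i0 j0 - Cy t0 i0 (j0 - 1)) / hy j0 with hDval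
    have hD : HasDerivWithinAt (fun s => ρ s i0 j0) Dval (Set.Ici 0) t0 :=
      hode i0 hi0 j0 hj0 t0 ht0pos.le
    have hgd : HasDerivAt (fun s : ℝ => ε * Real.exp (K * s))
        (ε * (Real.exp (K * t0) * (K * 1))) t0 :=
      (((hasDerivAt_id t0).const_mul K).exp).const_mul ε
    have hφd : HasDerivWithinAt (fun s => ρ s i0 j0 + ε * Real.exp (K * s))
        (Dval + ε * (Real.exp (K * t0) * (K * 1))) (Set.Ici 0) t0 :=
      hD.add hgd.hasDerivWithinAt
    -- the derivative is nonpositive (t0 is a minimum from the left)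
    have hder_le : Dval + ε * (Real.exp (K * t0) * (K * 1)) ≤ 0 := by
      have hslope := hasDerivWithinAt_iff_tendsto_slope.mp hφd
      refine le_of_tendsto (hslope.mono_left hfle) ?_
      filter_upwards [eventually_mem_nhdsWithin] with s hs
      have hφs : 0 < ρ s i0 j0 + ε * Real.exp (K * s) := hlower s hs.1 hs.2 i0 hi0 j0 hj0
      have hslope_eq : slope (fun s => ρ s i0 j0 + ε * Real.exp (K * s)) t0 s =
          ((ρ s i0 j0 + ε * Real.exp (K * s)) - (ρ t0 i0 j0 + ε * Real.exp (K * t0)))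
            / (s - t0) := slope_def_field _ t0 s
      rw [hslope_eq]
      have hzero : ρ t0 i0 j0 + ε * Real.exp (K * t0) = 0 := by rw [hρt0, hηdef]; ring
      exact le_of_lt (div_neg_of_pos_of_neg (by linarith) (by linarith [hs.2]))
    -- lower bound for Dval
    have hxi0 : 0 < hx i0 := hxpos i0 hi0
    have hyj0 : 0 < hy j0 := hypos j0 hj0
    have hi0m := hi0; rw [Finset.mem_Icc] at hi0m
    have hj0m := hj0; rw [Finset.mem_Icc] at hj0m
    set T1 : ℝ := if i0 < Nx then Mxh t0 i0 j0 / (hxhalf i0 * M t0 (i0 + 1) j0) else 0 with hT1def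
    set T2 : ℝ := if 1 < i0 then Mxh t0 (i0 - 1) j0 / (hxhalf (i0 - 1) * M t0 (i0 - 1) j0) else 0 with hT2def
    set T3 : ℝ := if j0 < Ny then Myh t0 i0 j0 / (hyhalf j0 * M t0 i0 (j0 + 1)) else 0 with hT3def
    set T4 : ℝ := if 1 < j0 then Myh t0 i0 (j0 - 1) / (hyhalf (j0 - 1) * M t0 i0 (j0 - 1)) else 0 with hT4def
    have htm0 : tm t0 i0 j0 = T1 / hx i0 + T2 / hx i0 + T3 / hy j0 + T4 / hy j0 := by
      simp only [htm, hT1def, hT2def, hT3def, hT4def]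
    have hB1 : -η * T1 ≤ Cx t0 i0 j0 := by
      rw [hT1def]
      by_cases h : i0 < Nx
      · rw [if_pos h]
        have hm : i0 ∈ Finset.Icc 1 (Nx - 1) := by rw [Finset.mem_Icc]; omega
        have hm1 : i0 + 1 ∈ Finset.Icc 1 Nx := by rw [Finset.mem_Icc]; omega
        have hMp : 0 < M t0 (i0 + 1) j0 := hMpos t0 _ hm1 _ hj0
        have hM0 : 0 < M t0 i0 j0 := hMpos t0 _ hi0 _ hj0
        have hMxp : 0 < Mxh t0 i0 j0 := hMxhpos t0 _ hm _ hj0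
        have hhp : 0 < hxhalf i0 := hhxhalfpos i0 hm
        have hρp : -η ≤ ρ t0 (i0 + 1) j0 := by have := hφt0 (i0 + 1) hm1 j0 hj0; linarith
        rw [hCx t0 i0 hm j0 hj0, hρt0]
        have k1 : -η / M t0 (i0 + 1) j0 ≤ ρ t0 (i0 + 1) j0 / M t0 (i0 + 1) j0 :=
          (div_le_div_iff_of_pos_right hMp).mpr hρp
        have k2 : 0 ≤ η / M t0 i0 j0 := le_of_lt (div_pos hηpos hM0)
        have k3 : -η / M t0 i0 j0 = -(η / M t0 i0 j0) := neg_div _ _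
        calc -η * (Mxh t0 i0 j0 / (hxhalf i0 * M t0 (i0 + 1) j0))
            = Mxh t0 i0 j0 / hxhalf i0 * (-η / M t0 (i0 + 1) j0) := by ring
          _ ≤ Mxh t0 i0 j0 / hxhalf i0 *
              (ρ t0 (i0 + 1) j0 / M t0 (i0 + 1) j0 - -η / M t0 i0 j0) := by
              apply mul_le_mul_of_nonneg_left (by linarith) (le_of_lt (div_pos hMxp hhp))
      · have hieq : i0 = Nx := by omega
        rw [if_neg h, hieq, hCxN t0 j0]
        norm_num
    have hB2 : -η * T2 ≤ -Cx t0 (i0 - 1) j0 := by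
      rw [hT2def]
      by_cases h : 1 < i0
      · rw [if_pos h]
        have hm : i0 - 1 ∈ Finset.Icc 1 (Nx - 1) := by rw [Finset.mem_Icc]; omega
        have hm1 : i0 - 1 ∈ Finset.Icc 1 Nx := by rw [Finset.mem_Icc]; omega
        have e1 : i0 - 1 + 1 = i0 := by omega
        have hMm : 0 < M t0 (i0 - 1) j0 := hMpos t0 _ hm1 _ hj0
        have hM0 : 0 < M t0 i0 j0 := hMpos t0 _ hi0 _ hj0
        have hMxp : 0 < Mxh t0 (i0 - 1) j0 := hMxhpos t0 _ hm _ hj0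
        have hhp : 0 < hxhalf (i0 - 1) := hhxhalfpos (i0 - 1) hm
        have hρm : -η ≤ ρ t0 (i0 - 1) j0 := by have := hφt0 (i0 - 1) hm1 j0 hj0; linarith
        rw [hCx t0 (i0 - 1) hm j0 hj0, e1, hρt0]
        have k1 : -η / M t0 (i0 - 1) j0 ≤ ρ t0 (i0 - 1) j0 / M t0 (i0 - 1) j0 :=
          (div_le_div_iff_of_pos_right hMm).mpr hρm
        have k2 : 0 ≤ η / M t0 i0 j0 := le_of_lt (div_pos hηpos hM0)
        have k3 : -η / M t0 i0 j0 = -(η / M t0 i0 j0) := neg_div _ _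
        calc -η * (Mxh t0 (i0 - 1) j0 / (hxhalf (i0 - 1) * M t0 (i0 - 1) j0))
            = Mxh t0 (i0 - 1) j0 / hxhalf (i0 - 1) * (-η / M t0 (i0 - 1) j0) := by ring
          _ ≤ Mxh t0 (i0 - 1) j0 / hxhalf (i0 - 1) *
              (η / M t0 i0 j0 + ρ t0 (i0 - 1) j0 / M t0 (i0 - 1) j0) := by
              apply mul_le_mul_of_nonneg_left (by linarith) (le_of_lt (div_pos hMxp hhp))
          _ = -(Mxh t0 (i0 - 1) j0 / hxhalf (i0 - 1) *
              (-η / M t0 i0 j0 - ρ t0 (i0 - 1) j0 / M t0 (i0 - 1) j0)) := by ring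
      · have hieq : i0 - 1 = 0 := by omega
        rw [if_neg h, hieq, hCx0 t0 j0]
        norm_num
    have hB3 : -η * T3 ≤ Cy t0 i0 j0 := by
      rw [hT3def]
      by_cases h : j0 < Ny
      · rw [if_pos h]
        have hm : j0 ∈ Finset.Icc 1 (Ny - 1) := by rw [Finset.mem_Icc]; omega
        have hm1 : j0 + 1 ∈ Finset.Icc 1 Ny := by rw [Finset.mem_Icc]; omega
        have hMp : 0 < M t0 i0 (j0 + 1) := hMpos t0 _ hi0 _ hm1
        have hM0 : 0 < M t0 i0 j0 := hMpos t0 _ hi0 _ hj0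
        have hMyp : 0 < Myh t0 i0 j0 := hMyhpos t0 _ hi0 _ hm
        have hhp : 0 < hyhalf j0 := hhyhalfpos j0 hm
        have hρp : -η ≤ ρ t0 i0 (j0 + 1) := by have := hφt0 i0 hi0 (j0 + 1) hm1; linarith
        rw [hCy t0 i0 hi0 j0 hm, hρt0]
        have k1 : -η / M t0 i0 (j0 + 1) ≤ ρ t0 i0 (j0 + 1) / M t0 i0 (j0 + 1) :=
          (div_le_div_iff_of_pos_right hMp).mpr hρp
        have k2 : 0 ≤ η / M t0 i0 j0 := le_of_lt (div_pos hηpos hM0)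
        have k3 : -η / M t0 i0 j0 = -(η / M t0 i0 j0) := neg_div _ _
        calc -η * (Myh t0 i0 j0 / (hyhalf j0 * M t0 i0 (j0 + 1)))
            = Myh t0 i0 j0 / hyhalf j0 * (-η / M t0 i0 (j0 + 1)) := by ring
          _ ≤ Myh t0 i0 j0 / hyhalf j0 *
              (ρ t0 i0 (j0 + 1) / M t0 i0 (j0 + 1) - -η / M t0 i0 j0) := by
              apply mul_le_mul_of_nonneg_left (by linarith) (le_of_lt (div_pos hMyp hhp))
      · have hjeq : j0 = Ny := by omega
        rw [if_neg h, hjeq, hCyN t0 i0]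
        norm_num
    have hB4 : -η * T4 ≤ -Cy t0 i0 (j0 - 1) := by
      rw [hT4def]
      by_cases h : 1 < j0
      · rw [if_pos h]
        have hm : j0 - 1 ∈ Finset.Icc 1 (Ny - 1) := by rw [Finset.mem_Icc]; omega
        have hm1 : j0 - 1 ∈ Finset.Icc 1 Ny := by rw [Finset.mem_Icc]; omega
        have e1 : j0 - 1 + 1 = j0 := by omega
        have hMm : 0 < M t0 i0 (j0 - 1) := hMpos t0 _ hi0 _ hm1
        have hM0 : 0 < M t0 i0 j0 := hMpos t0 _ hi0 _ hj0
        have hMyp : 0 < Myh t0 i0 (j0 - 1) := hMyhpos t0 _ hi0 _ hm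
        have hhp : 0 < hyhalf (j0 - 1) := hhyhalfpos (j0 - 1) hm
        have hρm : -η ≤ ρ t0 i0 (j0 - 1) := by have := hφt0 i0 hi0 (j0 - 1) hm1; linarith
        rw [hCy t0 i0 hi0 (j0 - 1) hm, e1, hρt0]
        have k1 : -η / M t0 i0 (j0 - 1) ≤ ρ t0 i0 (j0 - 1) / M t0 i0 (j0 - 1) :=
          (div_le_div_iff_of_pos_right hMm).mpr hρm
        have k2 : 0 ≤ η / M t0 i0 j0 := le_of_lt (div_pos hηpos hM0)
        have k3 : -η / M t0 i0 j0 = -(η / M t0 i0 j0) := neg_div _ _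
        calc -η * (Myh t0 i0 (j0 - 1) / (hyhalf (j0 - 1) * M t0 i0 (j0 - 1)))
            = Myh t0 i0 (j0 - 1) / hyhalf (j0 - 1) * (-η / M t0 i0 (j0 - 1)) := by ring
          _ ≤ Myh t0 i0 (j0 - 1) / hyhalf (j0 - 1) *
              (η / M t0 i0 j0 + ρ t0 i0 (j0 - 1) / M t0 i0 (j0 - 1)) := by
              apply mul_le_mul_of_nonneg_left (by linarith) (le_of_lt (div_pos hMyp hhp))
          _ = -(Myh t0 i0 (j0 - 1) / hyhalf (j0 - 1) *
              (-η / M t0 i0 j0 - ρ t0 i0 (j0 - 1) / M t0 i0 (j0 - 1))) := by ring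
      · have hjeq : j0 - 1 = 0 := by omega
        rw [if_neg h, hjeq, hCy0 t0 i0]
        norm_num
    have hDlow : -η * tm t0 i0 j0 ≤ Dval := by
      rw [htm0, hDval]
      have h12 : (-η * T1 + -η * T2) / hx i0 ≤ (Cx t0 i0 j0 - Cx t0 (i0 - 1) j0) / hx i0 :=
        (div_le_div_iff_of_pos_right hxi0).mpr (by linarith)
      have h34 : (-η * T3 + -η * T4) / hy j0 ≤ (Cy t0 i0 j0 - Cy t0 i0 (j0 - 1)) / hy j0 :=
        (div_le_div_iff_of_pos_right hyj0).mpr (by linarith)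
      have e : -η * (T1 / hx i0 + T2 / hx i0 + T3 / hy j0 + T4 / hy j0)
          = (-η * T1 + -η * T2) / hx i0 + (-η * T3 + -η * T4) / hy j0 := by ring
      linarith
    have htmC : tm t0 i0 j0 ≤ C := htm_le_C t0 ht0Icc i0 hi0 j0 hj0
    have hmul : η * tm t0 i0 j0 ≤ η * C := mul_le_mul_of_nonneg_left htmC hηpos.le
    have hKη : ε * (Real.exp (K * t0) * (K * 1)) = K * η := by rw [hηdef]; ring
    have hfinal : 0 < Dval + ε * (Real.exp (K * t0) * (K * 1)) := by
      rw [hKη, hK]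
      linarith
    linarith
  -- conclude
  by_contra hcontra
  push_neg at hcontra
  set ε : ℝ := -ρ t1 i1 j1 / (2 * Real.exp (K * t1)) with hεdef
  have hεpos : 0 < ε := by
    have := Real.exp_pos (K * t1)
    rw [hεdef]
    apply div_pos (by linarith) (by linarith)
  have hkey := key ε hεpos t1 (Set.mem_Icc.mpr ⟨ht1, le_refl t1⟩) i1 hi1 j1 hj1
  have hcalc : ε * Real.exp (K * t1) = -ρ t1 i1 j1 / 2 := by
    rw [hεdef]
    field_simp
  rw [hcalc] at hkey
  linarith
end

section
/- Conservation of mass for the 2D fully discrete scheme: if ρ^{n+1} ∈ ℝ^{N_x×N_y} satisfies the 2D fully discrete scheme with data ρ^n ∈ ℝ^{N_x×N_y} and τ > 0, then Σ_{i=1}^{N_x} Σ_{j=1}^{N_y} h^x_i h^y_j ρ^{n+1}_{i,j} = Σ_{i=1}^{N_x} Σ_{j=1}^{N_y} h^x_i h^y_j ρ^n_{i,j}. -/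
lemma tele_aux (f : ℕ → ℝ) (N : ℕ) : ∑ i ∈ Finset.Icc 1 N, (f i - f (i-1)) = f N - f 0 := by
  induction N with
  | zero => simp
  | succ n ih =>
    rw [Finset.sum_Icc_succ_top (by omega : 1 ≤ n+1), ih]
    simp

theorem fully_discrete_mass_conservation_2d
    (Nx Ny : ℕ) (hNx : 2 ≤ Nx) (hNy : 2 ≤ Ny)
    (hx : ℕ → ℝ) (hxpos : ∀ i ∈ Finset.Icc 1 Nx, 0 < hx i)
    (hy : ℕ → ℝ) (hypos : ∀ j ∈ Finset.Icc 1 Ny, 0 < hy j)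
    (a c : ℝ)
    (xhalf xc hxhalf : ℕ → ℝ) (yhalf yc hyhalf : ℕ → ℝ)
    (hxhalf0 : xhalf 0 = a)
    (hxhalfdef : ∀ i ∈ Finset.Icc 1 Nx, xhalf i = xhalf (i - 1) + hx i)
    (hxcdef : ∀ i ∈ Finset.Icc 1 Nx, xc i = xhalf (i - 1) + hx i / 2)
    (hhxhalf : ∀ i ∈ Finset.Icc 1 (Nx - 1), hxhalf i = (hx i + hx (i + 1)) / 2)
    (hyhalf0 : yhalf 0 = c)
    (hyhalfdef : ∀ j ∈ Finset.Icc 1 Ny, yhalf j = yhalf (j - 1) + hy j)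
    (hycdef : ∀ j ∈ Finset.Icc 1 Ny, yc j = yhalf (j - 1) + hy j / 2)
    (hhyhalf : ∀ j ∈ Finset.Icc 1 (Ny - 1), hyhalf j = (hy j + hy (j + 1)) / 2)
    (V W : ℝ → ℝ → ℝ)
    (Q : ℝ → ℝ → (ℕ → ℕ → ℝ) → ℝ)
    (hQ : ∀ (x y : ℝ) (v : ℕ → ℕ → ℝ), Q x y v =
      Real.exp (-V x y - ∑ k ∈ Finset.Icc 1 Nx, ∑ l ∈ Finset.Icc 1 Ny,
        hx k * hy l * W (xc k - x) (yc l - y) * v k l))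
    (ρn ρ1 : ℕ → ℕ → ℝ) (τ : ℝ) (hτ : 0 < τ)
    (Mn Mnxh Mnyh : ℕ → ℕ → ℝ)
    (hMn : ∀ i ∈ Finset.Icc 1 Nx, ∀ j ∈ Finset.Icc 1 Ny, Mn i j = Q (xc i) (yc j) ρn)
    (hMnxh : ∀ i ∈ Finset.Icc 1 (Nx - 1), ∀ j ∈ Finset.Icc 1 Ny,
      Mnxh i j = Q (xhalf i) (yc j) ρn)
    (hMnyh : ∀ i ∈ Finset.Icc 1 Nx, ∀ j ∈ Finset.Icc 1 (Ny - 1),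
      Mnyh i j = Q (xc i) (yhalf j) ρn)
    (Cx Cy : ℕ → ℕ → ℝ)
    (hCx : ∀ i ∈ Finset.Icc 1 (Nx - 1), ∀ j ∈ Finset.Icc 1 Ny,
      Cx i j = Mnxh i j / hxhalf i * (ρ1 (i + 1) j / Mn (i + 1) j - ρ1 i j / Mn i j))
    (hCy : ∀ i ∈ Finset.Icc 1 Nx, ∀ j ∈ Finset.Icc 1 (Ny - 1),
      Cy i j = Mnyh i j / hyhalf j * (ρ1 i (j + 1) / Mn i (j + 1) - ρ1 i j / Mn i j))
    (hCx0 : ∀ j : ℕ, Cx 0 j = 0) (hCxN : ∀ j : ℕ, Cx Nx j = 0)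
    (hCy0 : ∀ i : ℕ, Cy i 0 = 0) (hCyN : ∀ i : ℕ, Cy i Ny = 0)
    (hscheme : ∀ i ∈ Finset.Icc 1 Nx, ∀ j ∈ Finset.Icc 1 Ny,
      (ρ1 i j - ρn i j) / τ = (Cx i j - Cx (i - 1) j) / hx i + (Cy i j - Cy i (j - 1)) / hy j)
 :
    ∑ i ∈ Finset.Icc 1 Nx, ∑ j ∈ Finset.Icc 1 Ny, hx i * hy j * ρ1 i j =
      ∑ i ∈ Finset.Icc 1 Nx, ∑ j ∈ Finset.Icc 1 Ny, hx i * hy j * ρn i j := by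
  have key : ∀ i ∈ Finset.Icc 1 Nx, ∀ j ∈ Finset.Icc 1 Ny,
      hx i * hy j * ρ1 i j - hx i * hy j * ρn i j =
      τ * (hy j * (Cx i j - Cx (i-1) j)) + τ * (hx i * (Cy i j - Cy i (j-1))) := by
    intro i hi j hj
    have h := hscheme i hi j hj
    have hxi := hxpos i hi
    have hyj := hypos j hj
    field_simp at h
    nlinarith [h]
  have hsplit : ∑ i ∈ Finset.Icc 1 Nx, ∑ j ∈ Finset.Icc 1 Ny, hx i * hy j * ρ1 i j
      - ∑ i ∈ Finset.Icc 1 Nx, ∑ j ∈ Finset.Icc 1 Ny, hx i * hy j * ρn i j =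
      ∑ i ∈ Finset.Icc 1 Nx, ∑ j ∈ Finset.Icc 1 Ny,
        (τ * (hy j * (Cx i j - Cx (i-1) j)) + τ * (hx i * (Cy i j - Cy i (j-1)))) := by
    rw [← Finset.sum_sub_distrib]
    refine Finset.sum_congr rfl fun i hi => ?_
    rw [← Finset.sum_sub_distrib]
    exact Finset.sum_congr rfl fun j hj => key i hi j hj
  have hzero : ∑ i ∈ Finset.Icc 1 Nx, ∑ j ∈ Finset.Icc 1 Ny,
      (τ * (hy j * (Cx i j - Cx (i-1) j)) + τ * (hx i * (Cy i j - Cy i (j-1)))) = 0 := by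
    simp only [Finset.sum_add_distrib]
    have h1 : ∑ i ∈ Finset.Icc 1 Nx, ∑ j ∈ Finset.Icc 1 Ny,
        τ * (hy j * (Cx i j - Cx (i-1) j)) = 0 := by
      rw [Finset.sum_comm]
      refine Finset.sum_eq_zero fun j hj => ?_
      have := tele_aux (fun i => Cx i j) Nx
      simp only [← Finset.mul_sum]
      rw [this, hCxN j, hCx0 j]
      ring
    have h2 : ∑ i ∈ Finset.Icc 1 Nx, ∑ j ∈ Finset.Icc 1 Ny,
        τ * (hx i * (Cy i j - Cy i (j-1))) = 0 := by
      refine Finset.sum_eq_zero fun i hi => ?_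
      have := tele_aux (fun j => Cy i j) Ny
      simp only [← Finset.mul_sum]
      rw [this, hCyN i, hCy0 i]
      ring
    rw [h1, h2]; ring
  linarith [hsplit, hzero]
end

section
/- Positivity preservation for the 2D fully discrete scheme without time step restriction: if ρ^{n+1} ∈ ℝ^{N_x×N_y} satisfies the 2D fully discrete scheme with data ρ^n ∈ ℝ^{N_x×N_y} and any τ > 0, and ρ^n_{i,j} ≥ 0 for all i, j, then ρ^{n+1}_{i,j} ≥ 0 for all i, j. -/
theorem fully_discrete_positivity_2d
    (Nx Ny : ℕ) (hNx : 2 ≤ Nx) (hNy : 2 ≤ Ny)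
    (hx : ℕ → ℝ) (hxpos : ∀ i ∈ Finset.Icc 1 Nx, 0 < hx i)
    (hy : ℕ → ℝ) (hypos : ∀ j ∈ Finset.Icc 1 Ny, 0 < hy j)
    (a c : ℝ)
    (xhalf xc hxhalf : ℕ → ℝ) (yhalf yc hyhalf : ℕ → ℝ)
    (hxhalf0 : xhalf 0 = a)
    (hxhalfdef : ∀ i ∈ Finset.Icc 1 Nx, xhalf i = xhalf (i - 1) + hx i)
    (hxcdef : ∀ i ∈ Finset.Icc 1 Nx, xc i = xhalf (i - 1) + hx i / 2)
    (hhxhalf : ∀ i ∈ Finset.Icc 1 (Nx - 1), hxhalf i = (hx i + hx (i + 1)) / 2)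
    (hyhalf0 : yhalf 0 = c)
    (hyhalfdef : ∀ j ∈ Finset.Icc 1 Ny, yhalf j = yhalf (j - 1) + hy j)
    (hycdef : ∀ j ∈ Finset.Icc 1 Ny, yc j = yhalf (j - 1) + hy j / 2)
    (hhyhalf : ∀ j ∈ Finset.Icc 1 (Ny - 1), hyhalf j = (hy j + hy (j + 1)) / 2)
    (V W : ℝ → ℝ → ℝ)
    (Q : ℝ → ℝ → (ℕ → ℕ → ℝ) → ℝ)
    (hQ : ∀ (x y : ℝ) (v : ℕ → ℕ → ℝ), Q x y v =
      Real.exp (-V x y - ∑ k ∈ Finset.Icc 1 Nx, ∑ l ∈ Finset.Icc 1 Ny,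
        hx k * hy l * W (xc k - x) (yc l - y) * v k l))
    (ρn ρ1 : ℕ → ℕ → ℝ) (τ : ℝ) (hτ : 0 < τ)
    (Mn Mnxh Mnyh : ℕ → ℕ → ℝ)
    (hMn : ∀ i ∈ Finset.Icc 1 Nx, ∀ j ∈ Finset.Icc 1 Ny, Mn i j = Q (xc i) (yc j) ρn)
    (hMnxh : ∀ i ∈ Finset.Icc 1 (Nx - 1), ∀ j ∈ Finset.Icc 1 Ny,
      Mnxh i j = Q (xhalf i) (yc j) ρn)
    (hMnyh : ∀ i ∈ Finset.Icc 1 Nx, ∀ j ∈ Finset.Icc 1 (Ny - 1),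
      Mnyh i j = Q (xc i) (yhalf j) ρn)
    (Cx Cy : ℕ → ℕ → ℝ)
    (hCx : ∀ i ∈ Finset.Icc 1 (Nx - 1), ∀ j ∈ Finset.Icc 1 Ny,
      Cx i j = Mnxh i j / hxhalf i * (ρ1 (i + 1) j / Mn (i + 1) j - ρ1 i j / Mn i j))
    (hCy : ∀ i ∈ Finset.Icc 1 Nx, ∀ j ∈ Finset.Icc 1 (Ny - 1),
      Cy i j = Mnyh i j / hyhalf j * (ρ1 i (j + 1) / Mn i (j + 1) - ρ1 i j / Mn i j))
    (hCx0 : ∀ j : ℕ, Cx 0 j = 0) (hCxN : ∀ j : ℕ, Cx Nx j = 0)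
    (hCy0 : ∀ i : ℕ, Cy i 0 = 0) (hCyN : ∀ i : ℕ, Cy i Ny = 0)
    (hscheme : ∀ i ∈ Finset.Icc 1 Nx, ∀ j ∈ Finset.Icc 1 Ny,
      (ρ1 i j - ρn i j) / τ = (Cx i j - Cx (i - 1) j) / hx i + (Cy i j - Cy i (j - 1)) / hy j)
    (hρn : ∀ i ∈ Finset.Icc 1 Nx, ∀ j ∈ Finset.Icc 1 Ny, 0 ≤ ρn i j) :
    ∀ i ∈ Finset.Icc 1 Nx, ∀ j ∈ Finset.Icc 1 Ny, 0 ≤ ρ1 i j := by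
  have hMnpos : ∀ i ∈ Finset.Icc 1 Nx, ∀ j ∈ Finset.Icc 1 Ny, 0 < Mn i j := by
    intro i hi j hj
    rw [hMn i hi j hj, hQ]
    exact Real.exp_pos _
  have hMnxhpos : ∀ i ∈ Finset.Icc 1 (Nx - 1), ∀ j ∈ Finset.Icc 1 Ny, 0 < Mnxh i j := by
    intro i hi j hj
    rw [hMnxh i hi j hj, hQ]
    exact Real.exp_pos _
  have hMnyhpos : ∀ i ∈ Finset.Icc 1 Nx, ∀ j ∈ Finset.Icc 1 (Ny - 1), 0 < Mnyh i j := by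
    intro i hi j hj
    rw [hMnyh i hi j hj, hQ]
    exact Real.exp_pos _
  have hxhpos : ∀ i ∈ Finset.Icc 1 (Nx - 1), 0 < hxhalf i := by
    intro i hi
    rw [hhxhalf i hi]
    simp only [Finset.mem_Icc] at hi
    have h1 : 0 < hx i := hxpos i (Finset.mem_Icc.mpr (by omega))
    have h2 : 0 < hx (i + 1) := hxpos (i + 1) (Finset.mem_Icc.mpr (by omega))
    linarith
  have hyhpos : ∀ j ∈ Finset.Icc 1 (Ny - 1), 0 < hyhalf j := by
    intro j hj
    rw [hhyhalf j hj]
    simp only [Finset.mem_Icc] at hj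
    have h1 : 0 < hy j := hypos j (Finset.mem_Icc.mpr (by omega))
    have h2 : 0 < hy (j + 1) := hypos (j + 1) (Finset.mem_Icc.mpr (by omega))
    linarith
  -- minimizer of ρ1 / Mn over the grid
  obtain ⟨p, hpmem, hpmin⟩ := Finset.exists_min_image
    ((Finset.Icc 1 Nx) ×ˢ (Finset.Icc 1 Ny)) (fun q => ρ1 q.1 q.2 / Mn q.1 q.2)
    ⟨(1, 1), by
      rw [Finset.mem_product]
      constructor <;> · rw [Finset.mem_Icc]; omega⟩
  obtain ⟨i0, j0⟩ := p
  rw [Finset.mem_product] at hpmem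
  obtain ⟨hi0, hj0⟩ := hpmem
  have hmin : ∀ i ∈ Finset.Icc 1 Nx, ∀ j ∈ Finset.Icc 1 Ny,
      ρ1 i0 j0 / Mn i0 j0 ≤ ρ1 i j / Mn i j := by
    intro i hi j hj
    exact hpmin (i, j) (Finset.mem_product.mpr ⟨hi, hj⟩)
  have hi0' := Finset.mem_Icc.mp hi0
  have hj0' := Finset.mem_Icc.mp hj0
  -- Cx i0 j0 ≥ 0
  have hCxr : 0 ≤ Cx i0 j0 := by
    rcases eq_or_ne i0 Nx with h | h
    · rw [h, hCxN]
    · have hi0m : i0 ∈ Finset.Icc 1 (Nx - 1) := Finset.mem_Icc.mpr (by omega)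
      rw [hCx i0 hi0m j0 hj0]
      have hip : (i0 + 1) ∈ Finset.Icc 1 Nx := Finset.mem_Icc.mpr (by omega)
      have hd := hmin (i0 + 1) hip j0 hj0
      have hc : 0 ≤ Mnxh i0 j0 / hxhalf i0 :=
        le_of_lt (div_pos (hMnxhpos i0 hi0m j0 hj0) (hxhpos i0 hi0m))
      exact mul_nonneg hc (by linarith)
  have hCxl : Cx (i0 - 1) j0 ≤ 0 := by
    rcases eq_or_ne i0 1 with h | h
    · rw [h]; simp [hCx0]
    · have him : (i0 - 1) ∈ Finset.Icc 1 (Nx - 1) := Finset.mem_Icc.mpr (by omega)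
      rw [hCx (i0 - 1) him j0 hj0]
      have he : i0 - 1 + 1 = i0 := by omega
      rw [he]
      have him' : (i0 - 1) ∈ Finset.Icc 1 Nx := Finset.mem_Icc.mpr (by omega)
      have hd := hmin (i0 - 1) him' j0 hj0
      have hc : 0 ≤ Mnxh (i0 - 1) j0 / hxhalf (i0 - 1) :=
        le_of_lt (div_pos (hMnxhpos (i0 - 1) him j0 hj0) (hxhpos (i0 - 1) him))
      exact mul_nonpos_of_nonneg_of_nonpos hc (by linarith)
  have hCyr : 0 ≤ Cy i0 j0 := by
    rcases eq_or_ne j0 Ny with h | h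
    · rw [h, hCyN]
    · have hj0m : j0 ∈ Finset.Icc 1 (Ny - 1) := Finset.mem_Icc.mpr (by omega)
      rw [hCy i0 hi0 j0 hj0m]
      have hjp : (j0 + 1) ∈ Finset.Icc 1 Ny := Finset.mem_Icc.mpr (by omega)
      have hd := hmin i0 hi0 (j0 + 1) hjp
      have hc : 0 ≤ Mnyh i0 j0 / hyhalf j0 :=
        le_of_lt (div_pos (hMnyhpos i0 hi0 j0 hj0m) (hyhpos j0 hj0m))
      exact mul_nonneg hc (by linarith)
  have hCyl : Cy i0 (j0 - 1) ≤ 0 := by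
    rcases eq_or_ne j0 1 with h | h
    · rw [h]; simp [hCy0]
    · have hjm : (j0 - 1) ∈ Finset.Icc 1 (Ny - 1) := Finset.mem_Icc.mpr (by omega)
      rw [hCy i0 hi0 (j0 - 1) hjm]
      have he : j0 - 1 + 1 = j0 := by omega
      rw [he]
      have hjm' : (j0 - 1) ∈ Finset.Icc 1 Ny := Finset.mem_Icc.mpr (by omega)
      have hd := hmin i0 hi0 (j0 - 1) hjm'
      have hc : 0 ≤ Mnyh i0 (j0 - 1) / hyhalf (j0 - 1) :=
        le_of_lt (div_pos (hMnyhpos i0 hi0 (j0 - 1) hjm) (hyhpos (j0 - 1) hjm))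
      exact mul_nonpos_of_nonneg_of_nonpos hc (by linarith)
  -- at the minimizer, ρ1 ≥ ρn ≥ 0
  have hsch := hscheme i0 hi0 j0 hj0
  have hxip := hxpos i0 hi0
  have hyjp := hypos j0 hj0
  have hrhs : 0 ≤ (Cx i0 j0 - Cx (i0 - 1) j0) / hx i0 + (Cy i0 j0 - Cy i0 (j0 - 1)) / hy j0 := by
    have h1 : 0 ≤ (Cx i0 j0 - Cx (i0 - 1) j0) / hx i0 :=
      div_nonneg (by linarith) (le_of_lt hxip)
    have h2 : 0 ≤ (Cy i0 j0 - Cy i0 (j0 - 1)) / hy j0 :=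
      div_nonneg (by linarith) (le_of_lt hyjp)
    linarith
  have hρ1min : 0 ≤ ρ1 i0 j0 := by
    have h0 : 0 ≤ (ρ1 i0 j0 - ρn i0 j0) / τ := hsch ▸ hrhs
    have h1 : 0 ≤ ρ1 i0 j0 - ρn i0 j0 := by
      by_contra hcon
      push_neg at hcon
      have := div_neg_of_neg_of_pos hcon hτ
      linarith
    have := hρn i0 hi0 j0 hj0
    linarith
  have humin : 0 ≤ ρ1 i0 j0 / Mn i0 j0 :=
    div_nonneg hρ1min (le_of_lt (hMnpos i0 hi0 j0 hj0))
  intro i hi j hj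
  have hu : 0 ≤ ρ1 i j / Mn i j := le_trans humin (hmin i hi j hj)
  have hMp := hMnpos i hi j hj
  have : ρ1 i j = ρ1 i j / Mn i j * Mn i j := (div_mul_cancel₀ _ (ne_of_gt hMp)).symm
  rw [this]
  exact mul_nonneg hu (le_of_lt hMp)
end

section
/- Positivity preservation for the second order (predictor–corrector) 1D scheme under an explicit time step restriction: let g*_{j+1/2} = M*_{j+1/2}/h_{j+1/2}. Suppose ρ* ∈ ℝ^N satisfies the predictor step, ρ^{n+1}_j = 2ρ*_j − ρ^n_j for all j, ρ^n_j ≥ 0 for all j, and τ ≤ min{ 2h_1 M*_1 / g*_{3/2}, min_{1<j<N} 2h_j M*_j / (g*_{j+1/2} + g*_{j−1/2}), 2h_N M*_N / g*_{N−1/2} }. Then ρ^{n+1}_j ≥ 0 for all 1 ≤ j ≤ N. -/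
private lemma pc_aux {τ hj Mj c D u : ℝ} (hτ : 0 ≤ τ) (hh : 0 < hj) (hc : 0 ≤ c)
    (hu : 0 ≤ u) (hD : -(c * u) ≤ D) (hcfl : τ * c ≤ 2 * hj * Mj) :
    0 ≤ u * Mj + τ / 2 * (D / hj) := by
  have key : 0 ≤ 2 * hj * (u * Mj) + τ * D := by
    have h1 : 0 ≤ u * (2 * hj * Mj - τ * c) := mul_nonneg hu (sub_nonneg.mpr hcfl)
    have h2 : τ * -(c * u) ≤ τ * D := mul_le_mul_of_nonneg_left hD hτ
    nlinarith
  have h3 : u * Mj + τ / 2 * (D / hj) = (2 * hj * (u * Mj) + τ * D) / (2 * hj) := by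
    field_simp
  rw [h3]
  exact div_nonneg key (by positivity)

theorem predictor_corrector_positivity_1d
    (N : ℕ) (hN : 2 ≤ N)
    (h : ℕ → ℝ) (hpos : ∀ j ∈ Finset.Icc 1 N, 0 < h j)
    (a : ℝ)
    (xhalf xc hhalf : ℕ → ℝ)
    (hxhalf0 : xhalf 0 = a)
    (hxhalf : ∀ j ∈ Finset.Icc 1 N, xhalf j = xhalf (j - 1) + h j)
    (hxc : ∀ j ∈ Finset.Icc 1 N, xc j = xhalf (j - 1) + h j / 2)
    (hhhalf : ∀ j ∈ Finset.Icc 1 (N - 1), hhalf j = (h j + h (j + 1)) / 2)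
    (V W : ℝ → ℝ)
    (Q : ℝ → (ℕ → ℝ) → ℝ)
    (hQ : ∀ (x : ℝ) (v : ℕ → ℝ), Q x v =
      Real.exp (-V x - ∑ i ∈ Finset.Icc 1 N, h i * W (xc i - x) * v i))
    (ρn ρnm1 ρstar ρ1 : ℕ → ℝ) (τ : ℝ) (hτ : 0 < τ)
    (Ms Mshalf : ℕ → ℝ)
    (hMs : ∀ j ∈ Finset.Icc 1 N, Ms j = Q (xc j) (fun i => 3 / 2 * ρn i - 1 / 2 * ρnm1 i))
    (hMshalf : ∀ j ∈ Finset.Icc 1 (N - 1),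
      Mshalf j = Q (xhalf j) (fun i => 3 / 2 * ρn i - 1 / 2 * ρnm1 i))
    (Cs : ℕ → ℝ)
    (hCs : ∀ j ∈ Finset.Icc 1 (N - 1),
      Cs j = Mshalf j / hhalf j * (ρstar (j + 1) / Ms (j + 1) - ρstar j / Ms j))
    (hCs0 : Cs 0 = 0) (hCsN : Cs N = 0)
    (hpred : ∀ j ∈ Finset.Icc 1 N, (ρstar j - ρn j) / (τ / 2) = (Cs j - Cs (j - 1)) / h j)
    (hcorr : ∀ j ∈ Finset.Icc 1 N, ρ1 j = 2 * ρstar j - ρn j)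
    (gs : ℕ → ℝ) (hgs : ∀ j ∈ Finset.Icc 1 (N - 1), gs j = Mshalf j / hhalf j)
    (hρn : ∀ j ∈ Finset.Icc 1 N, 0 ≤ ρn j)
    (hτ1 : τ ≤ 2 * h 1 * Ms 1 / gs 1)
    (hτmid : ∀ j : ℕ, 1 < j → j < N → τ ≤ 2 * h j * Ms j / (gs j + gs (j - 1)))
    (hτN : τ ≤ 2 * h N * Ms N / gs (N - 1)) :
    ∀ j ∈ Finset.Icc 1 N, 0 ≤ ρ1 j := by
  have hτ0 : 0 ≤ τ := hτ.le
  have hMpos : ∀ j ∈ Finset.Icc 1 N, 0 < Ms j := by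
    intro j hj; rw [hMs j hj, hQ]; exact Real.exp_pos _
  have hgpos : ∀ j ∈ Finset.Icc 1 (N - 1), 0 < gs j := by
    intro j hj
    have hj' := Finset.mem_Icc.mp hj
    have h1 : 0 < h j := hpos j (Finset.mem_Icc.mpr ⟨hj'.1, by omega⟩)
    have h2 : 0 < h (j + 1) := hpos (j + 1) (Finset.mem_Icc.mpr (by omega))
    have hM : 0 < Mshalf j := by rw [hMshalf j hj, hQ]; exact Real.exp_pos _
    rw [hgs j hj, hhhalf j hj]
    exact div_pos hM (by linarith)
  -- rewrite Cs in terms of gs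
  have hCs' : ∀ j ∈ Finset.Icc 1 (N - 1),
      Cs j = gs j * (ρstar (j + 1) / Ms (j + 1) - ρstar j / Ms j) := by
    intro j hj; rw [hCs j hj, hgs j hj]
  -- predictor formula
  have hstar : ∀ j ∈ Finset.Icc 1 N,
      ρstar j = ρn j + τ / 2 * ((Cs j - Cs (j - 1)) / h j) := by
    intro j hj
    have hp := hpred j hj
    have h2 : (τ / 2 : ℝ) ≠ 0 := by positivity
    rw [div_eq_iff h2] at hp
    linarith
  -- minimum of ρstar j / Ms j
  have hne : (Finset.Icc 1 N).Nonempty := ⟨1, Finset.mem_Icc.mpr ⟨le_refl 1, by omega⟩⟩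
  obtain ⟨j0, hj0, hmin⟩ :=
    Finset.exists_min_image (Finset.Icc 1 N) (fun j => ρstar j / Ms j) hne
  have hj0' := Finset.mem_Icc.mp hj0
  have hCstop : 0 ≤ Cs j0 := by
    rcases eq_or_lt_of_le hj0'.2 with hEq | hLt
    · rw [hEq, hCsN]
    · have hmem : j0 ∈ Finset.Icc 1 (N - 1) := Finset.mem_Icc.mpr ⟨hj0'.1, by omega⟩
      rw [hCs' j0 hmem]
      have hm := hmin (j0 + 1) (Finset.mem_Icc.mpr (by omega))
      exact mul_nonneg (hgpos j0 hmem).le (by linarith)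
  have hCsbot : Cs (j0 - 1) ≤ 0 := by
    rcases eq_or_lt_of_le hj0'.1 with hEq | hLt
    · rw [show j0 - 1 = 0 by omega, hCs0]
    · have hmem : j0 - 1 ∈ Finset.Icc 1 (N - 1) := Finset.mem_Icc.mpr ⟨by omega, by omega⟩
      rw [hCs' _ hmem, show j0 - 1 + 1 = j0 by omega]
      have hm := hmin (j0 - 1) (Finset.mem_Icc.mpr ⟨by omega, by omega⟩)
      have := (hgpos _ hmem).le
      nlinarith
  have hstar0 : 0 ≤ ρstar j0 := by
    rw [hstar j0 hj0]
    have hh0 : 0 < h j0 := hpos j0 hj0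
    have hd : 0 ≤ (Cs j0 - Cs (j0 - 1)) / h j0 := div_nonneg (by linarith) hh0.le
    have hρ := hρn j0 hj0
    have : 0 ≤ τ / 2 * ((Cs j0 - Cs (j0 - 1)) / h j0) := mul_nonneg (by positivity) hd
    linarith
  have hspos : ∀ j ∈ Finset.Icc 1 N, 0 ≤ ρstar j := by
    intro j hj
    have h1 := hmin j hj
    have h0 : 0 ≤ ρstar j0 / Ms j0 := div_nonneg hstar0 (hMpos j0 hj0).le
    have hM := hMpos j hj
    rw [← div_mul_cancel₀ (ρstar j) (ne_of_gt hM)]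
    exact mul_nonneg (le_trans h0 h1) hM.le
  have hu : ∀ j ∈ Finset.Icc 1 N, 0 ≤ ρstar j / Ms j := fun j hj =>
    div_nonneg (hspos j hj) (hMpos j hj).le
  -- main argument
  intro j hj
  have hj' := Finset.mem_Icc.mp hj
  have hh0 : 0 < h j := hpos j hj
  have hM0 := hMpos j hj
  have hform : ρ1 j = ρstar j + τ / 2 * ((Cs j - Cs (j - 1)) / h j) := by
    rw [hcorr j hj, hstar j hj]; ring
  rw [hform]
  have hcancel : ρstar j / Ms j * Ms j = ρstar j := div_mul_cancel₀ _ (ne_of_gt hM0)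
  have huj : 0 ≤ ρstar j / Ms j := hu j hj
  rcases eq_or_lt_of_le hj'.1 with h1 | h1
  · -- j = 1
    subst h1
    have mem1 : 1 ∈ Finset.Icc 1 (N - 1) := Finset.mem_Icc.mpr ⟨le_refl 1, by omega⟩
    have hg := (hgpos 1 mem1).le
    have hu2 : 0 ≤ ρstar 2 / Ms 2 := hu 2 (Finset.mem_Icc.mpr (by omega))
    have hD : -(gs 1 * (ρstar 1 / Ms 1)) ≤ Cs 1 - Cs (1 - 1) := by
      rw [show (1 : ℕ) - 1 = 0 from rfl, hCs0, hCs' 1 mem1]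
      nlinarith [mul_nonneg hg hu2]
    have hcfl : τ * gs 1 ≤ 2 * h 1 * Ms 1 := (le_div_iff₀ (hgpos 1 mem1)).mp hτ1
    have key := pc_aux hτ0 hh0 hg huj hD hcfl
    rwa [hcancel] at key
  rcases eq_or_lt_of_le hj'.2 with h2 | h2
  · -- j = N
    subst h2
    have memN : j - 1 ∈ Finset.Icc 1 (j - 1) := Finset.mem_Icc.mpr ⟨by omega, le_refl _⟩
    have hg := (hgpos (j - 1) memN).le
    have huN1 : 0 ≤ ρstar (j - 1) / Ms (j - 1) := hu (j - 1) (Finset.mem_Icc.mpr ⟨by omega, by omega⟩)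
    have hD : -(gs (j - 1) * (ρstar j / Ms j)) ≤ Cs j - Cs (j - 1) := by
      rw [hCsN, hCs' _ memN, show j - 1 + 1 = j by omega]
      nlinarith [mul_nonneg hg huN1]
    have hcfl : τ * gs (j - 1) ≤ 2 * h j * Ms j := (le_div_iff₀ (hgpos _ memN)).mp hτN
    have key := pc_aux hτ0 hh0 hg huj hD hcfl
    rwa [hcancel] at key
  · -- 1 < j < N
    have memj : j ∈ Finset.Icc 1 (N - 1) := Finset.mem_Icc.mpr ⟨by omega, by omega⟩
    have memj1 : j - 1 ∈ Finset.Icc 1 (N - 1) := Finset.mem_Icc.mpr ⟨by omega, by omega⟩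
    have hgj := (hgpos j memj).le
    have hgj1 := (hgpos (j - 1) memj1).le
    have hur : 0 ≤ ρstar (j + 1) / Ms (j + 1) := hu (j + 1) (Finset.mem_Icc.mpr ⟨by omega, by omega⟩)
    have hul : 0 ≤ ρstar (j - 1) / Ms (j - 1) := hu (j - 1) (Finset.mem_Icc.mpr ⟨by omega, by omega⟩)
    have hD : -((gs j + gs (j - 1)) * (ρstar j / Ms j)) ≤ Cs j - Cs (j - 1) := by
      rw [hCs' j memj, hCs' _ memj1, show j - 1 + 1 = j by omega]
      nlinarith [mul_nonneg hgj hur, mul_nonneg hgj1 hul]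
    have hcfl : τ * (gs j + gs (j - 1)) ≤ 2 * h j * Ms j := by
      have hgsum : 0 < gs j + gs (j - 1) := by
        have := hgpos j memj; have := hgpos (j - 1) memj1; linarith
      exact (le_div_iff₀ hgsum).mp (hτmid j h1 h2)
    have key := pc_aux hτ0 hh0 (by linarith) huj hD hcfl
    rwa [hcancel] at key
end

section
/- Properties (1) and (2) of the local scaling limiter: under the limiter assumptions, the limited values satisfy c̃_j ≥ 0 for all 1 ≤ j ≤ m, and Σ_{j=1}^m c̃_j = Σ_{j=1}^m c_j. -/
theorem limiter_nonneg_and_conservative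
    (m : ℕ) (hm : 1 ≤ m)
    (c : ℕ → ℝ)
    (cbar : ℝ) (hcbar : cbar = (∑ j ∈ Finset.Icc 1 m, c j) / m)
    (hcbarpos : 0 < cbar)
    (cmin : ℝ)
    (hcminle : ∀ j ∈ Finset.Icc 1 m, cmin ≤ c j)
    (hcminmem : ∃ j ∈ Finset.Icc 1 m, c j = cmin)
    (hcminlt : cmin < cbar)
    (θ : ℝ) (hθ : θ = min 1 (cbar / (cbar - cmin)))
    (ctilde : ℕ → ℝ)
    (hctilde : ∀ j ∈ Finset.Icc 1 m, ctilde j = θ * c j + (1 - θ) * cbar)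
 :
    (∀ j ∈ Finset.Icc 1 m, 0 ≤ ctilde j) ∧
      ∑ j ∈ Finset.Icc 1 m, ctilde j = ∑ j ∈ Finset.Icc 1 m, c j := by
  have hd : (0:ℝ) < cbar - cmin := by linarith
  have hθ0 : 0 ≤ θ := by
    rw [hθ]
    exact le_min (by norm_num) (le_of_lt (div_pos hcbarpos hd))
  have hθ1 : θ ≤ 1 := by rw [hθ]; exact min_le_left _ _
  have hθ2 : θ ≤ cbar / (cbar - cmin) := by rw [hθ]; exact min_le_right _ _
  have hθ3 : θ * (cbar - cmin) ≤ cbar := by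
    have := mul_le_mul_of_nonneg_right hθ2 (le_of_lt hd)
    rwa [div_mul_cancel₀ _ (ne_of_gt hd)] at this
  have hm0 : (0:ℝ) < (m:ℝ) := by exact_mod_cast hm
  have hsum : (m:ℝ) * cbar = ∑ j ∈ Finset.Icc 1 m, c j := by
    rw [hcbar]; field_simp
  constructor
  · intro j hj
    rw [hctilde j hj]
    have h1 : cmin ≤ c j := hcminle j hj
    nlinarith
  · calc ∑ j ∈ Finset.Icc 1 m, ctilde j
        = ∑ j ∈ Finset.Icc 1 m, (θ * c j + (1 - θ) * cbar) :=
          Finset.sum_congr rfl hctilde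
      _ = θ * (∑ j ∈ Finset.Icc 1 m, c j) + (m:ℝ) * ((1 - θ) * cbar) := by
          rw [Finset.sum_add_distrib, ← Finset.mul_sum, Finset.sum_const,
            Nat.card_Icc]; simp [nsmul_eq_mul]
      _ = ∑ j ∈ Finset.Icc 1 m, c j := by nlinarith [hsum]
end

section
/- Property (3) of the local scaling limiter: under the limiter assumptions, if in addition c_min < 0, then for every 1 ≤ j ≤ m one has |c̃_j − c_j| ≤ m · (−c_min). -/
theorem limiter_deviation_bound
    (m : ℕ) (hm : 1 ≤ m)
    (c : ℕ → ℝ)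
    (cbar : ℝ) (hcbar : cbar = (∑ j ∈ Finset.Icc 1 m, c j) / m)
    (hcbarpos : 0 < cbar)
    (cmin : ℝ)
    (hcminle : ∀ j ∈ Finset.Icc 1 m, cmin ≤ c j)
    (hcminmem : ∃ j ∈ Finset.Icc 1 m, c j = cmin)
    (hcminlt : cmin < cbar)
    (θ : ℝ) (hθ : θ = min 1 (cbar / (cbar - cmin)))
    (ctilde : ℕ → ℝ)
    (hctilde : ∀ j ∈ Finset.Icc 1 m, ctilde j = θ * c j + (1 - θ) * cbar)
    (hcminneg : cmin < 0) :
    ∀ j ∈ Finset.Icc 1 m, |ctilde j - c j| ≤ m * (-cmin) := by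
  intro j hj
  have hm0 : (0:ℝ) < (m:ℝ) := by exact_mod_cast Nat.lt_of_lt_of_le Nat.zero_lt_one hm
  have hm1 : (1:ℝ) ≤ (m:ℝ) := by exact_mod_cast hm
  have hcard : (Finset.Icc 1 m).card = m := by simp
  have hsum : ∑ i ∈ Finset.Icc 1 m, c i = m * cbar := by
    rw [hcbar]; field_simp
  have hdpos : 0 < cbar - cmin := by linarith
  have hθval : θ = cbar / (cbar - cmin) := by
    rw [hθ, min_eq_right]
    rw [div_le_one hdpos]; linarith
  have h1θ : 1 - θ = (-cmin) / (cbar - cmin) := by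
    rw [hθval]; field_simp; ring
  have hcast : ((m - 1 : ℕ) : ℝ) = (m : ℝ) - 1 := by
    push_cast [Nat.cast_sub hm]; ring
  have herase : ((m:ℝ) - 1) * cmin ≤ ∑ i ∈ (Finset.Icc 1 m).erase j, c i := by
    have h := Finset.card_nsmul_le_sum ((Finset.Icc 1 m).erase j) c cmin
      (fun i hi => hcminle i (Finset.mem_of_mem_erase hi))
    rw [Finset.card_erase_of_mem hj, hcard, nsmul_eq_mul, hcast] at h
    exact h
  have hsplit : c j + ∑ i ∈ (Finset.Icc 1 m).erase j, c i = m * cbar := by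
    rw [Finset.add_sum_erase _ _ hj, hsum]
  have hub : c j ≤ m * cbar - ((m:ℝ) - 1) * cmin := by linarith
  have hlb : cmin ≤ c j := hcminle j hj
  rw [hctilde j hj]
  have heq : θ * c j + (1 - θ) * cbar - c j = (1 - θ) * (cbar - c j) := by ring
  rw [heq, abs_mul]
  have h1θpos : 0 ≤ 1 - θ := by rw [h1θ]; exact div_nonneg (by linarith) hdpos.le
  rw [abs_of_nonneg h1θpos, h1θ]
  have habs : |cbar - c j| ≤ m * (cbar - cmin) := by
    rw [abs_le]
    constructor <;> nlinarith
  calc (-cmin) / (cbar - cmin) * |cbar - c j|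
      ≤ (-cmin) / (cbar - cmin) * ((m:ℝ) * (cbar - cmin)) := by
        exact mul_le_mul_of_nonneg_left habs (div_nonneg (by linarith) hdpos.le)
    _ = (m:ℝ) * (-cmin) := by field_simp
end

section
/- Accuracy preservation of the local scaling limiter applied to cell averages: under the limiter assumptions, for any nonnegative real numbers g_1,…,g_m (g_j ≥ 0 for all j) and every 1 ≤ j ≤ m, one has |ρ̃_j − g_j| ≤ (1 + m·α) · max_{1≤i≤m} |ρ_i − g_i|. -/
theorem limiter_accuracy_preservation
    (m : ℕ) (hm : 1 ≤ m)
    (h : ℕ → ℝ) (hpos : ∀ j ∈ Finset.Icc 1 m, 0 < h j)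
    (α : ℝ) (hα : 1 ≤ α)
    (hratio : ∀ i ∈ Finset.Icc 1 m, ∀ j ∈ Finset.Icc 1 m, h i / h j ≤ α)
    (ρ : ℕ → ℝ)
    (c : ℕ → ℝ) (hc : ∀ j ∈ Finset.Icc 1 m, c j = h j * ρ j)
    (cbar : ℝ) (hcbar : cbar = (∑ j ∈ Finset.Icc 1 m, c j) / m)
    (hcbarpos : 0 < cbar)
    (cmin : ℝ)
    (hcminle : ∀ j ∈ Finset.Icc 1 m, cmin ≤ c j)
    (hcminmem : ∃ j ∈ Finset.Icc 1 m, c j = cmin)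
    (hcminlt : cmin < cbar)
    (θ : ℝ) (hθ : θ = min 1 (cbar / (cbar - cmin)))
    (ρtilde : ℕ → ℝ)
    (hρtilde : ∀ j ∈ Finset.Icc 1 m, ρtilde j = θ * ρ j + (1 - θ) * cbar / h j)
    (g : ℕ → ℝ) (hg : ∀ j ∈ Finset.Icc 1 m, 0 ≤ g j)
    (err : ℝ)
    (herrle : ∀ i ∈ Finset.Icc 1 m, |ρ i - g i| ≤ err)
    (herrmem : ∃ i ∈ Finset.Icc 1 m, |ρ i - g i| = err) :
    ∀ j ∈ Finset.Icc 1 m, |ρtilde j - g j| ≤ (1 + m * α) * err := by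
  intro j hj
  obtain ⟨k, hk, hck⟩ := hcminmem
  obtain ⟨i0, hi0, hierr⟩ := herrmem
  have hjpos : 0 < h j := hpos j hj
  have hkpos : 0 < h k := hpos k hk
  have hmR : (1:ℝ) ≤ (m:ℝ) := by exact_mod_cast hm
  have E0 : 0 ≤ err := hierr ▸ abs_nonneg _
  have Ej := abs_le.mp (herrle j hj)
  have Ek := abs_le.mp (herrle k hk)
  have Gj : 0 ≤ g j := hg j hj
  have Gk : 0 ≤ g k := hg k hk
  have hD : 0 < cbar - cmin := by linarith
  -- θ bounds
  have T1 : θ ≤ 1 := hθ ▸ min_le_left _ _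
  have T0 : 0 ≤ θ := by
    rw [hθ]
    exact le_min zero_le_one (le_of_lt (div_pos hcbarpos hD))
  -- -cmin ≤ α * (h j * err)
  have hkj : h k ≤ α * h j := (div_le_iff₀ hjpos).mp (hratio k hk j hj)
  have Kcmin : -cmin ≤ α * (h j * err) := by
    have hρk : -(ρ k) ≤ err := by linarith [Ek.2]
    have h1 : -cmin ≤ h k * err := by
      rw [← hck, hc k hk]
      nlinarith
    nlinarith
  -- sum bound : c j ≤ m * cbar - (m-1) * cmin
  have hsum : ∑ i ∈ Finset.Icc 1 m, c i = (m:ℝ) * cbar := by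
    have hm0 : (m:ℝ) ≠ 0 := by positivity
    rw [hcbar]
    field_simp
  have hcard : ((Finset.Icc 1 m).erase j).card = m - 1 := by
    rw [Finset.card_erase_of_mem hj, Nat.card_Icc]
    omega
  have herase : ((m:ℝ) - 1) * cmin ≤ ∑ i ∈ (Finset.Icc 1 m).erase j, c i := by
    have := Finset.card_nsmul_le_sum ((Finset.Icc 1 m).erase j) c cmin
      (fun i hi => hcminle i (Finset.mem_of_mem_erase hi))
    rw [hcard] at this
    have hcast : ((m - 1 : ℕ) : ℝ) = (m:ℝ) - 1 := by
      push_cast [Nat.cast_sub hm]; ring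
    simpa [nsmul_eq_mul, hcast] using this
  have hcjle : c j ≤ (m:ℝ) * cbar - ((m:ℝ) - 1) * cmin := by
    have := Finset.add_sum_erase (Finset.Icc 1 m) c hj
    have hs : c j + ∑ i ∈ (Finset.Icc 1 m).erase j, c i = (m:ℝ) * cbar := by
      rw [this, hsum]
    linarith
  -- key inequalities P1, P2 (by cases on sign of cmin)
  have P12 : (1 - θ) * cbar ≤ α * (h j * err) ∧
      (1 - θ) * (c j - cbar) ≤ ((m:ℝ) - 1) * (α * (h j * err)) := by
    rcases le_or_gt 0 cmin with hc0 | hc0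
    · -- θ = 1
      have hθ1 : θ = 1 := by
        rw [hθ, min_eq_left]
        rw [le_div_iff₀ hD]; linarith
      have h0 : 0 ≤ α * (h j * err) :=
        mul_nonneg (by linarith) (mul_nonneg hjpos.le E0)
      rw [hθ1]
      constructor
      · nlinarith [h0]
      · nlinarith [h0]
    · -- θ = cbar / (cbar - cmin) < 1
      have hθv : θ = cbar / (cbar - cmin) := by
        rw [hθ, min_eq_right]
        rw [div_le_one hD]; linarith
      have h1θ : (1 - θ) * (cbar - cmin) = -cmin := by
        rw [hθv]; field_simp; ring
      have h1θ0 : 0 ≤ 1 - θ := by linarith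
      constructor
      · -- (1-θ)*cbar ≤ (1-θ)*(cbar-cmin) = -cmin ≤ α h j err
        have h2 := mul_le_mul_of_nonneg_left
          (show cbar ≤ cbar - cmin by linarith) h1θ0
        linarith
      · have hbd : c j - cbar ≤ ((m:ℝ) - 1) * (cbar - cmin) := by linarith
        have h3 := mul_le_mul_of_nonneg_left hbd h1θ0
        have h4 : (1 - θ) * (((m:ℝ) - 1) * (cbar - cmin))
            = ((m:ℝ) - 1) * -cmin := by linear_combination ((m:ℝ) - 1) * h1θ
        have h5 := mul_le_mul_of_nonneg_left Kcmin
          (show (0:ℝ) ≤ (m:ℝ) - 1 by linarith)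
        linarith
  obtain ⟨P1, P2⟩ := P12
  -- rewrite the goal
  have hcj : c j = h j * ρ j := hc j hj
  have key : ρtilde j - g j = (θ * (h j * ρ j) + (1 - θ) * cbar - g j * h j) / h j := by
    rw [hρtilde j hj]
    field_simp
  rw [key, abs_div, abs_of_pos hjpos, div_le_iff₀ hjpos, abs_le]
  rw [hcj] at P2
  have h0 : 0 ≤ α * (h j * err) := mul_nonneg (by linarith) (mul_nonneg hjpos.le E0)
  have A1 : θ * h j * (ρ j - g j) ≤ θ * h j * err :=
    mul_le_mul_of_nonneg_left Ej.2 (mul_nonneg T0 hjpos.le)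
  have A2 : 0 ≤ (1 - θ) * (h j * err) :=
    mul_nonneg (by linarith) (mul_nonneg hjpos.le E0)
  have A3 : 0 ≤ (1 - θ) * (h j * g j) :=
    mul_nonneg (by linarith) (mul_nonneg hjpos.le Gj)
  have A5 : 0 ≤ ((m:ℝ) - 1) * (α * (h j * err)) := mul_nonneg (by linarith) h0
  have B1 : h j * (g j - ρ j) ≤ h j * err :=
    mul_le_mul_of_nonneg_left (by linarith [Ej.1]) hjpos.le
  constructor
  · linarith
  · linarith
end

section
/- Boundedness of the local averaging set (Theorem on |S_k|): under the stated assumptions, if K² · ∫_0^1 ρ(x_{1/2} + θ·η) dθ > (λ + C) · α² · η², where η = Σ_{j=1}^K h_j, then Σ_{j=1}^K h_j ρ_j > 0; that is, positive local averages are obtained over a block of K cells satisfying this condition. -/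
lemma abs_int_abs (y : ℝ) : |(∫ u in (0:ℝ)..y, |u|)| = y ^ 2 / 2 := by
  rcases le_or_gt 0 y with hy | hy
  · rw [intervalIntegral.integral_congr (g := fun u => u)
      (fun u hu => by
        rw [Set.uIcc_of_le hy] at hu
        exact abs_of_nonneg hu.1)]
    rw [integral_id, show ((y:ℝ)^2 - 0^2)/2 = y^2/2 by ring]
    exact abs_of_nonneg (by positivity)
  · rw [intervalIntegral.integral_congr (g := fun u => -u)
      (fun u hu => by
        rw [Set.uIcc_of_ge hy.le] at hu
        exact abs_of_nonpos hu.2)]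
    rw [intervalIntegral.integral_neg, integral_id, abs_neg,
      show ((y:ℝ)^2 - 0^2)/2 = y^2/2 by ring]
    exact abs_of_nonneg (by positivity)

lemma taylor2_bound (ρ : ℝ → ℝ) (hρ : ContDiff ℝ 2 ρ) (M m x : ℝ)
    (hM : ∀ t ∈ Set.uIcc m x, |deriv (deriv ρ) t| ≤ M) :
    |ρ x - ρ m - deriv ρ m * (x - m)| ≤ M / 2 * (x - m) ^ 2 := by
  have hd1 : Differentiable ℝ ρ := hρ.differentiable (by norm_num)
  have hd2 : Differentiable ℝ (deriv ρ) := by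
    have := (hρ.iterate_deriv' 1 1).differentiable (by norm_num)
    simpa using this
  have hc1 : Continuous (deriv ρ) := hd2.continuous
  have hc2 : Continuous (deriv (deriv ρ)) := by
    have := (hρ.iterate_deriv' 0 2).continuous
    simpa [Function.iterate_succ] using this
  have hM0 : 0 ≤ M := le_trans (abs_nonneg _) (hM m Set.left_mem_uIcc)
  have key : ∀ t ∈ Set.uIcc m x, |deriv ρ t - deriv ρ m| ≤ M * |t - m| := by
    intro t ht
    have e : deriv ρ t - deriv ρ m = ∫ s in m..t, deriv (deriv ρ) s :=
      (intervalIntegral.integral_deriv_eq_sub (fun s _ => hd2 s)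
        (hc2.intervalIntegrable m t)).symm
    rw [e, show |t - m| = |t - m| from rfl]
    have := intervalIntegral.norm_integral_le_of_norm_le_const
      (C := M) (f := deriv (deriv ρ)) (a := m) (b := t)
      (fun s hs => hM s (Set.uIcc_subset_uIcc Set.left_mem_uIcc ht
        (Set.uIoc_subset_uIcc hs)))
    simpa [Real.norm_eq_abs, abs_sub_comm t m, mul_comm] using this
  have e1 : ρ x - ρ m = ∫ t in m..x, deriv ρ t :=
    (intervalIntegral.integral_deriv_eq_sub (fun t _ => hd1 t)
      (hc1.intervalIntegrable m x)).symm
  have e2 : deriv ρ m * (x - m) = ∫ t in m..x, deriv ρ m := by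
    rw [intervalIntegral.integral_const, smul_eq_mul]; ring
  have hint1 : IntervalIntegrable (fun t => deriv ρ t) MeasureTheory.volume m x :=
    hc1.intervalIntegrable m x
  have hint2 : IntervalIntegrable (fun _ : ℝ => deriv ρ m) MeasureTheory.volume m x :=
    intervalIntegrable_const
  have e3 : ρ x - ρ m - deriv ρ m * (x - m)
      = ∫ t in m..x, (deriv ρ t - deriv ρ m) := by
    rw [e1, e2, ← intervalIntegral.integral_sub hint1 hint2]
  rw [e3]
  have hg : IntervalIntegrable (fun t => M * |t - m|) MeasureTheory.volume m x :=
    (continuous_const.mul ((continuous_id.sub continuous_const).abs)).intervalIntegrable m x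
  have hb := intervalIntegral.norm_integral_le_abs_of_norm_le (g := fun t => M * |t - m|)
    (μ := MeasureTheory.volume) (f := fun t => deriv ρ t - deriv ρ m) (a := m) (b := x)
    ((MeasureTheory.ae_restrict_iff' measurableSet_uIoc).mpr
      (MeasureTheory.ae_of_all _ (fun t ht => key t (Set.uIoc_subset_uIcc ht)))) hg
  have ecomp : (∫ t in m..x, M * |t - m|) = M * ∫ u in (0:ℝ)..(x - m), |u| := by
    rw [intervalIntegral.integral_const_mul]
    congr 1
    have := intervalIntegral.integral_comp_sub_right (a := m) (b := x)
      (fun u => |u|) m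
    simpa using this
  rw [ecomp] at hb
  calc |∫ t in m..x, (deriv ρ t - deriv ρ m)|
      ≤ |M * (∫ u in (0:ℝ)..(x - m), |u|)| := hb
    _ = M * ((x - m) ^ 2 / 2) := by
        rw [abs_mul, abs_of_nonneg hM0, abs_int_abs]
    _ = M / 2 * (x - m) ^ 2 := by ring

lemma midpoint_bound (ρ : ℝ → ℝ) (hρ : ContDiff ℝ 2 ρ) (M c d : ℝ) (hcd : c ≤ d)
    (hM : ∀ t ∈ Set.Icc c d, |deriv (deriv ρ) t| ≤ M) :
    |(∫ x in c..d, ρ x) - (d - c) * ρ ((c + d) / 2)| ≤ M / 24 * (d - c) ^ 3 := by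
  set m := (c + d) / 2 with hm
  have hmmem : m ∈ Set.Icc c d := ⟨by rw [hm]; linarith, by rw [hm]; linarith⟩
  have hM0 : 0 ≤ M := le_trans (abs_nonneg _) (hM m hmmem)
  have hpt : ∀ x ∈ Set.Icc c d, |ρ x - ρ m - deriv ρ m * (x - m)| ≤ M / 2 * (x - m) ^ 2 :=
    fun x hx => taylor2_bound ρ hρ M m x
      (fun t ht => hM t ((Set.uIcc_subset_Icc hmmem hx) ht))
  have hcont : Continuous ρ := hρ.continuous
  have hglin : Continuous (fun x : ℝ => ρ m + deriv ρ m * (x - m)) := by continuity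
  have hxm : (∫ x in c..d, (x - m)) = 0 := by
    have := intervalIntegral.integral_comp_sub_right (a := c) (b := d) (fun u => u) m
    rw [this, integral_id, hm]
    ring
  have e0 : (∫ x in c..d, (ρ m + deriv ρ m * (x - m))) = (d - c) * ρ m := by
    rw [intervalIntegral.integral_add intervalIntegrable_const
      ((by fun_prop : Continuous fun x : ℝ => deriv ρ m * (x - m)).intervalIntegrable c d),
      intervalIntegral.integral_const, intervalIntegral.integral_const_mul, hxm, smul_eq_mul]
    ring
  have e1 : (∫ x in c..d, ρ x) - (d - c) * ρ m
      = ∫ x in c..d, (ρ x - (ρ m + deriv ρ m * (x - m))) := by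
    rw [intervalIntegral.integral_sub (hcont.intervalIntegrable c d)
      (hglin.intervalIntegrable c d), e0]
  rw [e1]
  have hg : IntervalIntegrable (fun x => M / 2 * (x - m) ^ 2) MeasureTheory.volume c d :=
    (continuous_const.mul ((continuous_id.sub continuous_const).pow 2)).intervalIntegrable c d
  have hb := intervalIntegral.norm_integral_le_abs_of_norm_le
    (g := fun x => M / 2 * (x - m) ^ 2) (μ := MeasureTheory.volume)
    (f := fun x => ρ x - (ρ m + deriv ρ m * (x - m))) (a := c) (b := d)
    ((MeasureTheory.ae_restrict_iff' measurableSet_uIoc).mpr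
      (MeasureTheory.ae_of_all _ (fun x hx => by
        have hx' : x ∈ Set.Icc c d := Set.Ioc_subset_Icc_self (by
          rwa [Set.uIoc_of_le hcd] at hx)
        have := hpt x hx'
        simpa [Real.norm_eq_abs, sub_add_eq_sub_sub] using this))) hg
  have ecomp : (∫ x in c..d, M / 2 * (x - m) ^ 2)
      = M / 2 * (((d - m) ^ 3 - (c - m) ^ 3) / 3) := by
    rw [intervalIntegral.integral_const_mul]
    congr 1
    have := intervalIntegral.integral_comp_sub_right (a := c) (b := d)
      (fun u => u ^ 2) m
    rw [this, integral_pow]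
    norm_num
  rw [ecomp] at hb
  calc |∫ x in c..d, (ρ x - (ρ m + deriv ρ m * (x - m)))|
      ≤ |M / 2 * (((d - m) ^ 3 - (c - m) ^ 3) / 3)| := hb
    _ = M / 24 * (d - c) ^ 3 := by
        have h3 : (0:ℝ) ≤ (d - c) ^ 3 := pow_nonneg (by linarith) 3
        rw [abs_of_nonneg (by rw [hm]; nlinarith [mul_nonneg hM0 h3])]
        rw [hm]; ring

lemma sum_Icc_one_eq_range (K : ℕ) (f : ℕ → ℝ) :
    ∑ j ∈ Finset.Icc 1 K, f j = ∑ i ∈ Finset.range K, f (i + 1) := by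
  induction K with
  | zero => simp
  | succ n ih => rw [Finset.sum_Icc_succ_top (by omega), Finset.sum_range_succ, ih]

theorem local_average_positivity
    (K : ℕ) (hK : 1 ≤ K)
    (h : ℕ → ℝ)
    (a : ℝ)
    (xhalf xc : ℕ → ℝ)
    (hxhalf0 : xhalf 0 = a)
    (hxhalf : ∀ j ∈ Finset.Icc 1 K, xhalf j = xhalf (j - 1) + h j)
    (hxc : ∀ j ∈ Finset.Icc 1 K, xc j = xhalf (j - 1) + h j / 2)
    (hmin : ℝ) (hhmin : 0 < hmin)
    (α : ℝ) (hα : 1 ≤ α)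
    (hbound : ∀ j ∈ Finset.Icc 1 K, hmin ≤ h j ∧ h j ≤ α * hmin)
    (ρ : ℝ → ℝ) (hρ : ContDiff ℝ 2 ρ)
    (hρnn : ∀ x ∈ Set.Icc a (xhalf K), 0 ≤ ρ x)
    (lam : ℝ)
    (hlam : lam = 1 / 24 * sSup ((fun x => |iteratedDeriv 2 ρ x|) '' Set.Icc a (xhalf K)))
    (ρd : ℕ → ℝ) (Cc : ℝ) (hCc : 0 ≤ Cc)
    (happrox : ∀ j ∈ Finset.Icc 1 K, |ρd j - ρ (xc j)| ≤ Cc * hmin ^ 2)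
    (η : ℝ) (hη : η = ∑ j ∈ Finset.Icc 1 K, h j)
    (hcond : (lam + Cc) * α ^ 2 * η ^ 2 <
      (K : ℝ) ^ 2 * ∫ t in (0 : ℝ)..1, ρ (a + t * η)) :
    0 < ∑ j ∈ Finset.Icc 1 K, h j * ρd j := by
  have hKpos : (0:ℝ) < K := by exact_mod_cast hK
  have hhj : ∀ j ∈ Finset.Icc 1 K, 0 < h j := fun j hj => lt_of_lt_of_le hhmin (hbound j hj).1
  -- partial sums for xhalf
  have hx : ∀ i, i ≤ K → xhalf i = a + ∑ j ∈ Finset.Icc 1 i, h j := by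
    intro i
    induction i with
    | zero => intro _; simp [hxhalf0]
    | succ n ih =>
      intro hn
      have h1 : (n + 1) ∈ Finset.Icc 1 K := by rw [Finset.mem_Icc]; omega
      rw [hxhalf (n + 1) h1]
      simp only [Nat.add_sub_cancel]
      rw [ih (by omega), Finset.sum_Icc_succ_top (by omega : 1 ≤ n + 1)]
      ring
  have hxK : xhalf K = a + η := by rw [hx K le_rfl, hη]
  have hKh : (K : ℝ) * hmin ≤ η := by
    rw [hη]
    calc (K : ℝ) * hmin = ∑ _j ∈ Finset.Icc 1 K, hmin := by
          rw [Finset.sum_const, Nat.card_Icc, nsmul_eq_mul]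
          norm_num
      _ ≤ ∑ j ∈ Finset.Icc 1 K, h j := Finset.sum_le_sum (fun j hj => (hbound j hj).1)
  have hηpos : 0 < η := lt_of_lt_of_le (by positivity) hKh
  have hab : a ≤ xhalf K := by rw [hxK]; linarith
  have hxmono : ∀ i, i ≤ K → a ≤ xhalf i ∧ xhalf i ≤ xhalf K := by
    intro i hi
    rw [hx i hi, hx K le_rfl]
    constructor
    · have hnn : 0 ≤ ∑ j ∈ Finset.Icc 1 i, h j :=
        Finset.sum_nonneg (fun j hj => (hhj j (Finset.Icc_subset_Icc_right hi hj)).le)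
      linarith
    · have hle : ∑ j ∈ Finset.Icc 1 i, h j ≤ ∑ j ∈ Finset.Icc 1 K, h j :=
        Finset.sum_le_sum_of_subset_of_nonneg (Finset.Icc_subset_Icc_right hi)
          (fun j hj _ => (hhj j hj).le)
      linarith
  -- the sup bound
  obtain ⟨M, hMdef⟩ : ∃ M, M = sSup ((fun x => |iteratedDeriv 2 ρ x|) '' Set.Icc a (xhalf K)) :=
    ⟨_, rfl⟩
  rw [← hMdef] at hlam
  have hcontD : Continuous fun x => |iteratedDeriv 2 ρ x| :=
    (hρ.continuous_iteratedDeriv 2 (by norm_num)).abs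
  have hMle : ∀ x ∈ Set.Icc a (xhalf K), |deriv (deriv ρ) x| ≤ M := by
    intro x hx'
    have h2 : iteratedDeriv 2 ρ = deriv (deriv ρ) := by
      have : (2 : ℕ) = 1 + 1 := rfl
      rw [this, iteratedDeriv_succ, iteratedDeriv_one]
    rw [← h2]
    rw [hMdef]
    exact le_csSup (isCompact_Icc.image hcontD).bddAbove (Set.mem_image_of_mem _ hx')
  have hM0 : 0 ≤ M := le_trans (abs_nonneg _) (hMle a ⟨le_refl a, hab⟩)
  have hlam' : lam = M / 24 := by rw [hlam]; ring
  have hlam0 : 0 ≤ lam := by rw [hlam']; positivity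
  -- substitution in the condition integral
  have hIθ : (∫ t in (0:ℝ)..1, ρ (a + t * η)) = η⁻¹ * ∫ x in a..(a + η), ρ x := by
    have hsub := intervalIntegral.integral_comp_mul_add (a := (0:ℝ)) (b := 1) (f := ρ)
      (c := η) (ne_of_gt hηpos) a
    simp only [smul_eq_mul, mul_zero, zero_add, mul_one] at hsub
    calc (∫ t in (0:ℝ)..1, ρ (a + t * η)) = ∫ t in (0:ℝ)..1, ρ (η * t + a) := by
          congr 1; funext t; ring_nf
      _ = η⁻¹ * ∫ x in a..(η + a), ρ x := hsub
      _ = η⁻¹ * ∫ x in a..(a + η), ρ x := by rw [add_comm η a]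
  -- splitting the integral
  have hsplit : ∑ j ∈ Finset.Icc 1 K, (∫ x in xhalf (j - 1)..xhalf j, ρ x)
      = ∫ x in a..xhalf K, ρ x := by
    have hadj : ∀ i < K, IntervalIntegrable ρ MeasureTheory.volume (xhalf i) (xhalf (i + 1)) :=
      fun i _ => hρ.continuous.intervalIntegrable _ _
    have h1 := intervalIntegral.sum_integral_adjacent_intervals hadj
    rw [hxhalf0] at h1
    rw [← h1, sum_Icc_one_eq_range K (fun j => ∫ x in xhalf (j - 1)..xhalf j, ρ x)]
    simp
  -- per-cell lower bound
  have key : ∀ j ∈ Finset.Icc 1 K,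
      (∫ x in xhalf (j - 1)..xhalf j, ρ x) - lam * h j ^ 3 - Cc * hmin ^ 2 * h j
        ≤ h j * ρd j := by
    intro j hj
    obtain ⟨hj1, hj2⟩ := Finset.mem_Icc.mp hj
    have hjm1 : j - 1 ≤ K := by omega
    have hd : xhalf j = xhalf (j - 1) + h j := hxhalf j hj
    have hhjpos := hhj j hj
    have hcd : xhalf (j - 1) ≤ xhalf j := by rw [hd]; linarith
    have hsub : Set.Icc (xhalf (j - 1)) (xhalf j) ⊆ Set.Icc a (xhalf K) :=
      Set.Icc_subset_Icc (hxmono (j - 1) hjm1).1 (hxmono j hj2).2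
    have hmid := midpoint_bound ρ hρ M (xhalf (j - 1)) (xhalf j) hcd
      (fun t ht => hMle t (hsub ht))
    have hmidpt : (xhalf (j - 1) + xhalf j) / 2 = xc j := by rw [hxc j hj, hd]; ring
    have hdc : xhalf j - xhalf (j - 1) = h j := by rw [hd]; ring
    rw [hmidpt, hdc] at hmid
    have habs1 := (abs_le.mp hmid).2
    have habs2 := (abs_le.mp (happrox j hj)).1
    have hprod : h j * (-(Cc * hmin ^ 2)) ≤ h j * (ρd j - ρ (xc j)) :=
      mul_le_mul_of_nonneg_left habs2 hhjpos.le
    rw [hlam']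
    nlinarith [habs1, hprod]
  -- summing
  have hsumle : ∑ j ∈ Finset.Icc 1 K,
      ((∫ x in xhalf (j - 1)..xhalf j, ρ x) - lam * h j ^ 3 - Cc * hmin ^ 2 * h j)
      ≤ ∑ j ∈ Finset.Icc 1 K, h j * ρd j := Finset.sum_le_sum key
  have hexpand : ∑ j ∈ Finset.Icc 1 K,
      ((∫ x in xhalf (j - 1)..xhalf j, ρ x) - lam * h j ^ 3 - Cc * hmin ^ 2 * h j)
      = (∫ x in a..xhalf K, ρ x) - lam * (∑ j ∈ Finset.Icc 1 K, h j ^ 3)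
        - Cc * hmin ^ 2 * η := by
    rw [Finset.sum_sub_distrib, Finset.sum_sub_distrib, hsplit, ← Finset.mul_sum,
      ← Finset.mul_sum, hη]
  rw [hexpand] at hsumle
  -- cube-sum bound
  have hcube : ∑ j ∈ Finset.Icc 1 K, h j ^ 3 ≤ α ^ 2 * hmin ^ 2 * η := by
    rw [hη, Finset.mul_sum]
    apply Finset.sum_le_sum
    intro j hj
    obtain ⟨hb1, hb2⟩ := hbound j hj
    have hjpos := hhj j hj
    have h2 : h j ^ 2 ≤ (α * hmin) ^ 2 := pow_le_pow_left₀ hjpos.le hb2 2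
    calc h j ^ 3 = h j ^ 2 * h j := by ring
      _ ≤ (α * hmin) ^ 2 * h j := mul_le_mul_of_nonneg_right h2 hjpos.le
      _ = α ^ 2 * hmin ^ 2 * h j := by ring
  have hmin2 : (K : ℝ) ^ 2 * hmin ^ 2 ≤ η ^ 2 := by
    have hKhpos : (0:ℝ) ≤ (K : ℝ) * hmin := by positivity
    have := pow_le_pow_left₀ hKhpos hKh 2
    calc (K : ℝ) ^ 2 * hmin ^ 2 = ((K : ℝ) * hmin) ^ 2 := by ring
      _ ≤ η ^ 2 := this
  -- lower bound on the integral
  have hI : (lam + Cc) * α ^ 2 * η ^ 3 < (∫ x in a..xhalf K, ρ x) * (K : ℝ) ^ 2 := by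
    rw [hIθ] at hcond
    rw [hxK]
    calc (lam + Cc) * α ^ 2 * η ^ 3 = η * ((lam + Cc) * α ^ 2 * η ^ 2) := by ring
      _ < η * ((K : ℝ) ^ 2 * (η⁻¹ * ∫ x in a..(a + η), ρ x)) :=
          mul_lt_mul_of_pos_left hcond hηpos
      _ = (∫ x in a..(a + η), ρ x) * (K : ℝ) ^ 2 := by
          field_simp
  -- final combination
  have hK2 : (0:ℝ) < (K : ℝ) ^ 2 := by positivity
  have hb1 : lam * (∑ j ∈ Finset.Icc 1 K, h j ^ 3) * (K : ℝ) ^ 2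
      ≤ lam * α ^ 2 * η ^ 3 := by
    calc lam * (∑ j ∈ Finset.Icc 1 K, h j ^ 3) * (K : ℝ) ^ 2
        ≤ lam * (α ^ 2 * hmin ^ 2 * η) * (K : ℝ) ^ 2 := by
          apply mul_le_mul_of_nonneg_right _ hK2.le
          exact mul_le_mul_of_nonneg_left hcube hlam0
      _ = lam * α ^ 2 * η * ((K : ℝ) ^ 2 * hmin ^ 2) := by ring
      _ ≤ lam * α ^ 2 * η * η ^ 2 := by
          apply mul_le_mul_of_nonneg_left hmin2
          positivity
      _ = lam * α ^ 2 * η ^ 3 := by ring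
  have hb2 : Cc * hmin ^ 2 * η * (K : ℝ) ^ 2 ≤ Cc * α ^ 2 * η ^ 3 := by
    calc Cc * hmin ^ 2 * η * (K : ℝ) ^ 2 = Cc * η * ((K : ℝ) ^ 2 * hmin ^ 2) := by ring
      _ ≤ Cc * η * η ^ 2 := by
          apply mul_le_mul_of_nonneg_left hmin2
          positivity
      _ = Cc * 1 * η ^ 3 := by ring
      _ ≤ Cc * α ^ 2 * η ^ 3 := by
          apply mul_le_mul_of_nonneg_right
          · apply mul_le_mul_of_nonneg_left _ hCc
            nlinarith
          · positivity
  have hlt : (lam * (∑ j ∈ Finset.Icc 1 K, h j ^ 3) + Cc * hmin ^ 2 * η) * (K : ℝ) ^ 2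
      < (∫ x in a..xhalf K, ρ x) * (K : ℝ) ^ 2 := by
    have e : (lam * (∑ j ∈ Finset.Icc 1 K, h j ^ 3) + Cc * hmin ^ 2 * η) * (K : ℝ) ^ 2
        = lam * (∑ j ∈ Finset.Icc 1 K, h j ^ 3) * (K : ℝ) ^ 2
          + Cc * hmin ^ 2 * η * (K : ℝ) ^ 2 := by ring
    rw [e]
    have e2 : lam * α ^ 2 * η ^ 3 + Cc * α ^ 2 * η ^ 3 = (lam + Cc) * α ^ 2 * η ^ 3 := by
      ring
    linarith [hb1, hb2, hI]
  have hfin := lt_of_mul_lt_mul_right hlt hK2.le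
  linarith [hsumle, hfin]
end
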